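/- arXiv:1708.00196 — 3 statements merged into one kernel-verified Lean document; each statement's English description precedes it below -/
import Mathlib

section
/- For p ≥ 0, s ≥ 2, t ≥ 1, and n = s + t + p + 1, the balanced bipartite graph M_{n,n}^{s,t;−} is 2p-Hamilton-biconnected. -/
/-- Bipartite graph on `α ⊕ β` determined by a cross relation. -/
def crossGraph {α β : Type*} (r : α → β → Prop) : SimpleGraph (α ⊕ β) where
  Adj u v := match u, v with
    | Sum.inl i, Sum.inr j => r i j
    | Sum.inr j, Sum.inl i => r i j
    | _, _ => False
  symm := ⟨by rintro (i|i) (j|j) h <;> first | exact h.elim | exact h⟩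
  loopless := ⟨by rintro (i|i) h <;> exact h⟩

/-- Block class of an index: `1` for the first `a` indices, `2` for the next `b`, else `3`. -/
def nClass (a b : ℕ) (i : ℕ) : ℕ := if i < a then 1 else if i < a + b then 2 else 3

/-- The graph `M_{n,n}^{s,t;-}`: left blocks `X₁,X₂,X₃` of sizes `s-1,1,n-s`, right blocks
`Y₁,Y₂,Y₃` of sizes `n-t-1,1,t`; `X₁` is joined to `Y₁`, `X₂` to `Y₁ ∪ Y₂`,
and `X₃` to `Y₁ ∪ Y₂ ∪ Y₃`, i.e. a cross pair is adjacent iff `class(y) ≤ class(x)`. -/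
def MgraphMinus (n s t : ℕ) : SimpleGraph (Fin n ⊕ Fin n) :=
  crossGraph (fun i j => nClass (n-t-1) 1 (j:ℕ) ≤ nClass (s-1) 1 (i:ℕ))

/-- A balanced bipartite graph `G` with parts `X, Y` is `2p`-Hamilton-biconnected:
for every `W` meeting each part in `p` vertices, the subgraph induced on the complement of
`W` has a Hamiltonian path between any vertex of `X \ W` and any vertex of `Y \ W`. -/
def TwoPHamBic {V : Type*} [DecidableEq V] (G : SimpleGraph V) (X Y : Finset V) (p : ℕ) :
    Prop :=
  ∀ W : Finset V, (W ∩ X).card = p → (W ∩ Y).card = p →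
    ∀ x ∈ X, ∀ y ∈ Y, ∀ (hx : x ∉ W) (hy : y ∉ W),
      ∃ w : (G.induce {v : V | v ∉ W}).Walk ⟨x, hx⟩ ⟨y, hy⟩, w.IsHamiltonian



namespace Stmt15

variable {α : Type*} {β : Type*}

/-- Interleave two lists, starting with the first. -/
def itl : List α → List α → List α
  | [], ys => ys
  | x :: xs, ys => x :: itl ys xs
termination_by xs ys => xs.length + ys.length
decreasing_by simp; omega

@[simp] theorem itl_nil (ys : List α) : itl [] ys = ys := by rw [itl]

theorem itl_cons (x : α) (xs ys : List α) : itl (x :: xs) ys = x :: itl ys xs := by rw [itl]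

theorem itl_perm : ∀ (xs ys : List α), (itl xs ys).Perm (xs ++ ys)
  | [], ys => by simp
  | x :: xs, ys => by
    rw [itl_cons]
    refine ((itl_perm ys xs).cons x).trans ?_
    exact (List.perm_append_comm.cons x)
termination_by xs ys => xs.length + ys.length
decreasing_by simp; omega

theorem itl_head? (x : α) (xs ys : List α) : (itl (x :: xs) ys).head? = some x := by
  rw [itl_cons]; rfl

theorem itl_getLast? : ∀ (xs ys : List α),
    (xs.length = ys.length → ys ≠ [] → (itl xs ys).getLast? = ys.getLast?)
    ∧ (xs.length = ys.length + 1 → (itl xs ys).getLast? = xs.getLast?)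
  | [], ys => by
    constructor
    · intro h hne; simp
    · intro h; simp at h
  | x :: xs, [] => by
    constructor
    · intro h hne; exact absurd rfl hne
    · intro h
      have hx : xs = [] := by simpa using h
      subst hx
      simp [itl_cons]
  | x :: xs, y :: ys => by
    constructor
    · intro h _
      rw [itl_cons, itl_cons, List.getLast?_cons_cons, ← itl_cons]
      exact (itl_getLast? (y :: ys) xs).2
        (by simp only [List.length_cons] at h ⊢; omega)
    · intro h
      rw [itl_cons, itl_cons, List.getLast?_cons_cons, ← itl_cons]
      have hx : xs ≠ [] := by
        intro hh; subst hh; simp at h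
      rw [(itl_getLast? (y :: ys) xs).1
        (by simp only [List.length_cons] at h ⊢; omega) hx]
      obtain ⟨x', xs', rfl⟩ := List.exists_cons_of_ne_nil hx
      simp
termination_by xs ys => xs.length + ys.length
decreasing_by all_goals simp; omega

theorem itl_chain (R : α → α → Prop) : ∀ (xs ys : List α),
    (xs.length = ys.length ∧ List.Forall₂ R xs ys ∧ List.Forall₂ R ys.dropLast xs.tail
      ∨ xs.length = ys.length + 1 ∧ List.Forall₂ R xs.dropLast ys ∧ List.Forall₂ R ys xs.tail) →
    List.Chain' R (itl xs ys)
  | [], ys => by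
    rintro (⟨h, _, _⟩ | ⟨h, _, _⟩)
    · have : ys = [] := List.length_eq_zero_iff.mp (by simp at h; omega)
      subst this; simp [List.Chain']
    · simp at h
  | x :: xs, [] => by
    rintro (⟨h, _, _⟩ | ⟨h, _, _⟩)
    · simp at h
    · have : xs = [] := by simpa using h
      subst this; simp [itl_cons, List.Chain']
  | x :: xs, y :: ys => by
    rintro (⟨hlen, h1, h2⟩ | ⟨hlen, h1, h2⟩)
    · rw [itl_cons]
      apply List.isChain_cons.mpr
      constructor
      · intro z hz
        rw [itl_head?] at hz
        cases hz
        rcases h1 with _ | ⟨hr, _⟩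
        exact hr
      · apply itl_chain R (y :: ys) xs
        right
        refine ⟨by simp only [List.length_cons] at hlen ⊢; omega, by simpa using h2, ?_⟩
        rcases h1 with _ | ⟨_, h1t⟩
        simpa using h1t
    · rw [itl_cons]
      apply List.isChain_cons.mpr
      have hx : xs ≠ [] := by
        intro hh; subst hh
        simp only [List.length_cons, List.length_nil] at hlen
        omega
      have hdl : (x :: xs).dropLast = x :: xs.dropLast := by
        obtain ⟨x', xs', rfl⟩ := List.exists_cons_of_ne_nil hx
        simp
      rw [hdl] at h1
      constructor
      · intro z hz
        rw [itl_head?] at hz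
        cases hz
        rcases h1 with _ | ⟨hr, _⟩
        exact hr
      · apply itl_chain R (y :: ys) xs
        left
        refine ⟨by simp only [List.length_cons] at hlen ⊢; omega, by simpa using h2, ?_⟩
        rcases h1 with _ | ⟨_, h1t⟩
        exact h1t
termination_by xs ys => xs.length + ys.length
decreasing_by all_goals simp; omega

theorem forall₂_blanket {R : α → β → Prop} :
    ∀ (l : List α) (m : List β), l.length = m.length →
      (∀ a ∈ l, ∀ b ∈ m, R a b) → List.Forall₂ R l m
  | [], [], _, _ => List.Forall₂.nil
  | [], _ :: _, h, _ => by simp at h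
  | _ :: _, [], h, _ => by simp at h
  | a :: l, b :: m, h, H => by
    refine List.Forall₂.cons (H a (by simp) b (by simp)) ?_
    exact forall₂_blanket l m (by simpa using h)
      (fun a' ha' b' hb' => H a' (by simp [ha']) b' (by simp [hb']))

section Walk

variable {V : Type*} {H : SimpleGraph V}

def mkWalk : ∀ (l : List V) (hc : l.Chain' H.Adj) (h : l ≠ []), H.Walk (l.head h) (l.getLast h)
  | [_], _, _ => SimpleGraph.Walk.nil
  | a :: b :: l, hc, _ =>
    (SimpleGraph.Walk.cons ((List.isChain_cons_cons.mp hc).1)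
      (mkWalk (b :: l) ((List.isChain_cons_cons.mp hc).2) (by simp))).copy rfl
      (List.getLast_cons (by simp)).symm

theorem mkWalk_support : ∀ (l : List V) (hc : l.Chain' H.Adj) (h : l ≠ []),
    (mkWalk l hc h).support = l
  | [_], _, _ => rfl
  | a :: b :: l, hc, _ => by
    rw [mkWalk]
    exact (SimpleGraph.Walk.support_copy ..).trans
      (congrArg (List.cons a) (mkWalk_support (b :: l) _ _))

theorem chain'_pmap {P : α → Prop} {R : α → α → Prop} {R' : β → β → Prop} (f : ∀ a, P a → β)
    (hf : ∀ a b ha hb, R a b → R' (f a ha) (f b hb)) :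
    ∀ (l : List α) (h : ∀ a ∈ l, P a), l.Chain' R → (l.pmap f h).Chain' R'
  | [], _, _ => by simp [List.Chain']
  | [_], _, _ => by simp [List.Chain']
  | a :: b :: l, h, hc => by
    have hc' := List.isChain_cons_cons.mp hc
    simp only [List.pmap]
    refine List.isChain_cons_cons.mpr ⟨hf _ _ _ _ hc'.1, ?_⟩
    exact chain'_pmap f hf (b :: l) (fun v hv => h v (List.mem_cons_of_mem _ hv)) hc'.2

theorem getLast_pmap' {P : α → Prop} (f : ∀ a, P a → β) :
    ∀ (l : List α) (h : ∀ a ∈ l, P a) (hne : l ≠ []) (hne' : l.pmap f h ≠ []),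
      (l.pmap f h).getLast hne' = f (l.getLast hne) (h _ (List.getLast_mem hne))
  | [], _, hne, _ => absurd rfl hne
  | [_], _, _, _ => rfl
  | a :: b :: l, h, _, _ => by
    simp only [List.pmap]
    rw [List.getLast_cons (by simp)]
    have := getLast_pmap' f (b :: l) (fun v hv => h v (List.mem_cons_of_mem _ hv))
      (by simp) (by simp [List.pmap])
    simp only [List.pmap] at this
    rw [this]
    simp [List.getLast_cons]

/-- Build a Hamiltonian walk on an induced subgraph from a suitable list of base vertices. -/
theorem build_ham {V : Type*} [DecidableEq V] (G : SimpleGraph V) (S : Set V) (l : List V)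
    (hchain : l.Chain' G.Adj) (hnd : l.Nodup) (hmem : ∀ v, v ∈ l ↔ v ∈ S)
    (x y : V) (hx : x ∈ S) (hy : y ∈ S)
    (hhead : l.head? = some x) (hlast : l.getLast? = some y) :
    ∃ w : (G.induce S).Walk ⟨x, hx⟩ ⟨y, hy⟩, w.IsHamiltonian := by
  have hne : l ≠ [] := by intro h; subst h; simp at hhead
  have hmem' : ∀ v ∈ l, v ∈ S := fun v hv => (hmem v).mp hv
  have hne' : l.pmap (fun v hv => (⟨v, hv⟩ : S)) hmem' ≠ [] := by
    cases l with
    | nil => exact absurd rfl hne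
    | cons a l => simp [List.pmap]
  have hchain' : (l.pmap (fun v hv => (⟨v, hv⟩ : S)) hmem').Chain' (G.induce S).Adj := by
    apply chain'_pmap (R := G.Adj)
    · intro a b ha hb hab
      exact hab
    · exact hchain
  have hlast0 : l.getLast hne = y := by
    rw [List.getLast?_eq_getLast hne] at hlast
    exact Option.some_injective _ hlast
  have hhd : (l.pmap (fun v hv => (⟨v, hv⟩ : S)) hmem').head hne' = ⟨x, hx⟩ := by
    cases l with
    | nil => exact absurd rfl hne
    | cons a l =>
      simp only [List.head?_cons] at hhead
      cases hhead
      rfl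
  have hlt : (l.pmap (fun v hv => (⟨v, hv⟩ : S)) hmem').getLast hne' = ⟨y, hy⟩ := by
    rw [getLast_pmap' (fun v hv => (⟨v, hv⟩ : S)) l hmem' hne hne']
    exact Subtype.ext hlast0
  refine ⟨((mkWalk _ hchain' hne').copy hhd hlt), ?_⟩
  intro v
  rw [SimpleGraph.Walk.support_copy, mkWalk_support]
  refine @List.count_eq_one_of_mem S instBEqOfDecidableEq _ _ _ ?_ ?_
  · apply List.Nodup.pmap
    · intro a ha b hb hab
      exact congrArg Subtype.val hab
    · exact hnd
  · rw [List.mem_pmap]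
    exact ⟨v.1, (hmem v.1).mpr v.2, rfl⟩

end Walk

end Stmt15

namespace Stmt15

lemma nClass_cases (a b i : ℕ) : nClass a b i = 1 ∨ nClass a b i = 2 ∨ nClass a b i = 3 := by
  unfold nClass; split_ifs <;> simp

lemma nClass_ge1 (a b i : ℕ) : 1 ≤ nClass a b i := by unfold nClass; split_ifs <;> omega
lemma nClass_le3 (a b i : ℕ) : nClass a b i ≤ 3 := by unfold nClass; split_ifs <;> omega
lemma nClass_eq_one_iff (a b i : ℕ) : nClass a b i = 1 ↔ i < a := by
  unfold nClass; split_ifs <;> omega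
lemma nClass_eq_two (a b i : ℕ) (h : nClass a b i = 2) : a ≤ i ∧ i < a + b := by
  unfold nClass at h; split_ifs at h <;> omega
lemma nClass_eq_three (a b i : ℕ) (h : nClass a b i = 3) : a + b ≤ i := by
  unfold nClass at h; split_ifs at h <;> omega

lemma card_filter_lt (n m : ℕ) :
    ((Finset.univ : Finset (Fin n)).filter (fun i : Fin n => (i:ℕ) < m)).card = min m n := by
  have himg : ((Finset.univ : Finset (Fin n)).filter (fun i : Fin n => (i:ℕ) < m)).image Fin.val
      = (Finset.range n).filter (fun a => a < m) := by
    ext a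
    simp only [Finset.mem_image, Finset.mem_filter, Finset.mem_univ, true_and,
      Finset.mem_range]
    constructor
    · rintro ⟨i, hi, rfl⟩; exact ⟨i.isLt, hi⟩
    · rintro ⟨ha, ham⟩; exact ⟨⟨a, ha⟩, ham, rfl⟩
  have hr : (Finset.range n).filter (fun a => a < m) = Finset.range (min m n) := by
    ext a; simp [Finset.mem_range]; omega
  rw [← Finset.card_image_of_injective _ Fin.val_injective, himg, hr, Finset.card_range]

theorem perm_of_ms {α : Type*} {u v : List α} (h : (u : Multiset α) = (v : Multiset α)) :
    u.Perm v := Multiset.coe_eq_coe.mp h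

/-- Final assembly: a suitable pair of lists gives a Hamiltonian walk on the complement of `W`. -/
theorem finish {V : Type*} [DecidableEq V] (G : SimpleGraph V) (W : Finset V)
    (L R : List V) (x y : V) (hx : x ∉ W) (hy : y ∉ W)
    (hlen : L.length = R.length)
    (hhead : L.head? = some x) (hlast : R.getLast? = some y)
    (h1 : List.Forall₂ G.Adj L R) (h2 : List.Forall₂ G.Adj R.dropLast L.tail)
    (hnd : (L ++ R).Nodup) (hcov : ∀ v, v ∈ L ++ R ↔ v ∉ W) :
    ∃ w : (G.induce {v : V | v ∉ W}).Walk ⟨x, hx⟩ ⟨y, hy⟩, w.IsHamiltonian := by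
  have hLne : L ≠ [] := by intro h; subst h; simp at hhead
  have hRne : R ≠ [] := by intro h; subst h; simp at hlast
  apply build_ham G _ (itl L R)
  · exact itl_chain _ L R (Or.inl ⟨hlen, h1, h2⟩)
  · exact ((itl_perm L R).nodup_iff).mpr hnd
  · intro v; rw [(itl_perm L R).mem_iff]; exact hcov v
  · obtain ⟨a, L', rfl⟩ := List.exists_cons_of_ne_nil hLne
    rw [itl_head?]
    simpa using hhead
  · rw [(itl_getLast? L R).1 hlen hRne]; exact hlast

end Stmt15

set_option maxHeartbeats 2000000 in
open Stmt15 in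
/-- For `p ≥ 0`, `s ≥ 2`, `t ≥ 1`, and `n = s + t + p + 1`, the graph
`M_{n,n}^{s,t;−}` is `2p`-Hamilton-biconnected. -/
theorem stmt15 (n s t p : ℕ) (hs : 2 ≤ s) (ht : 1 ≤ t) (hn : n = s + t + p + 1) :
    TwoPHamBic (MgraphMinus n s t)
      (Finset.univ.image Sum.inl) (Finset.univ.image Sum.inr) p := by
  intro W hWX hWY x hxX y hyY hx hy
  classical
  obtain ⟨xi, -, rfl⟩ := Finset.mem_image.mp hxX
  obtain ⟨yj, -, rfl⟩ := Finset.mem_image.mp hyY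
  set G := MgraphMinus n s t with hG
  set cL : Fin n → ℕ := fun i => nClass (s-1) 1 (i:ℕ) with hcL
  set cR : Fin n → ℕ := fun j => nClass (n-t-1) 1 (j:ℕ) with hcR
  have adjLR : ∀ (i j : Fin n), cR j ≤ cL i → G.Adj (Sum.inl i) (Sum.inr j) := fun i j h => h
  -- remaining-vertex finsets
  set TL := Finset.univ.filter (fun i : Fin n => Sum.inl i ∉ W) with hTL
  set TR := Finset.univ.filter (fun j : Fin n => Sum.inr j ∉ W) with hTR
  have hxiTL : xi ∈ TL := by simp [hTL, hx]
  have hyjTR : yj ∈ TR := by simp [hTR, hy]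
  have cardX : (Finset.univ.image Sum.inl : Finset (Fin n ⊕ Fin n)).card = n := by
    rw [Finset.card_image_of_injective _ Sum.inl_injective, Finset.card_univ, Fintype.card_fin]
  have cardY : (Finset.univ.image Sum.inr : Finset (Fin n ⊕ Fin n)).card = n := by
    rw [Finset.card_image_of_injective _ Sum.inr_injective, Finset.card_univ, Fintype.card_fin]
  have hTLcard : TL.card = n - p := by
    have h1 : TL.image Sum.inl = (Finset.univ.image Sum.inl) \ W := by
      ext v
      simp only [Finset.mem_image, Finset.mem_sdiff, hTL, Finset.mem_filter, Finset.mem_univ,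
        true_and]
      constructor
      · rintro ⟨i, hiw, rfl⟩; exact ⟨⟨i, rfl⟩, hiw⟩
      · rintro ⟨⟨i, -, rfl⟩, hw⟩; exact ⟨i, hw, rfl⟩
    have h2 := Finset.card_image_of_injective TL (Sum.inl_injective : Function.Injective (Sum.inl : Fin n → Fin n ⊕ Fin n))
    rw [h1] at h2
    have h3 := Finset.card_inter_add_card_sdiff (Finset.univ.image Sum.inl) W
    rw [Finset.inter_comm] at h3
    rw [hWX, cardX] at h3
    omega
  have hTRcard : TR.card = n - p := by
    have h1 : TR.image Sum.inr = (Finset.univ.image Sum.inr) \ W := by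
      ext v
      simp only [Finset.mem_image, Finset.mem_sdiff, hTR, Finset.mem_filter, Finset.mem_univ,
        true_and]
      constructor
      · rintro ⟨i, hiw, rfl⟩; exact ⟨⟨i, rfl⟩, hiw⟩
      · rintro ⟨⟨i, -, rfl⟩, hw⟩; exact ⟨i, hw, rfl⟩
    have h2 := Finset.card_image_of_injective TR (Sum.inr_injective : Function.Injective (Sum.inr : Fin n → Fin n ⊕ Fin n))
    rw [h1] at h2
    have h3 := Finset.card_inter_add_card_sdiff (Finset.univ.image Sum.inr) W
    rw [Finset.inter_comm] at h3
    rw [hWY, cardY] at h3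
    omega
  set LA : ℕ → Finset (Fin n) := fun c => (TL.erase xi).filter (fun i => cL i = c) with hLA
  set RB : ℕ → Finset (Fin n) := fun c => (TR.erase yj).filter (fun j => cR j = c) with hRB
  have memLA : ∀ c i, i ∈ LA c ↔ (i ≠ xi ∧ Sum.inl i ∉ W ∧ cL i = c) := by
    intro c i
    simp only [hLA, Finset.mem_filter, Finset.mem_erase, hTL, Finset.mem_univ, true_and]
    tauto
  have memRB : ∀ c j, j ∈ RB c ↔ (j ≠ yj ∧ Sum.inr j ∉ W ∧ cR j = c) := by
    intro c j
    simp only [hRB, Finset.mem_filter, Finset.mem_erase, hTR, Finset.mem_univ, true_and]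
    tauto
  -- partition of the cards
  have haSum : (LA 1).card + (LA 2).card + (LA 3).card = s + t := by
    have he : (TL.erase xi).card = s + t := by
      rw [Finset.card_erase_of_mem hxiTL, hTLcard]; omega
    have h1 := Finset.card_filter_add_card_filter_not
      (s := TL.erase xi) (p := fun i => cL i = 1)
    have h2 := Finset.card_filter_add_card_filter_not
      (s := (TL.erase xi).filter (fun i => ¬ cL i = 1)) (p := fun i => cL i = 2)
    rw [Finset.filter_filter, Finset.filter_filter] at h2
    have e2 : ((TL.erase xi).filter (fun i => ¬cL i = 1 ∧ cL i = 2)) = LA 2 := by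
      apply Finset.filter_congr; intro i _
      simp only [hcL]
      constructor
      · rintro ⟨_, h⟩; exact h
      · intro h; exact ⟨by omega, h⟩
    have e3 : ((TL.erase xi).filter (fun i => ¬cL i = 1 ∧ ¬cL i = 2)) = LA 3 := by
      apply Finset.filter_congr; intro i _
      have := nClass_cases (s-1) 1 (i:ℕ)
      simp only [hcL] at *
      constructor
      · rintro ⟨h1', h2'⟩; omega
      · intro h; omega
    rw [e2, e3] at h2
    rw [he] at h1
    simp only [hLA] at *
    omega
  have hbSum : (RB 1).card + (RB 2).card + (RB 3).card = s + t := by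
    have he : (TR.erase yj).card = s + t := by
      rw [Finset.card_erase_of_mem hyjTR, hTRcard]; omega
    have h1 := Finset.card_filter_add_card_filter_not
      (s := TR.erase yj) (p := fun j => cR j = 1)
    have h2 := Finset.card_filter_add_card_filter_not
      (s := (TR.erase yj).filter (fun j => ¬ cR j = 1)) (p := fun j => cR j = 2)
    rw [Finset.filter_filter, Finset.filter_filter] at h2
    have e2 : ((TR.erase yj).filter (fun j => ¬cR j = 1 ∧ cR j = 2)) = RB 2 := by
      apply Finset.filter_congr; intro j _
      simp only [hcR]
      constructor
      · rintro ⟨_, h⟩; exact h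
      · intro h; exact ⟨by omega, h⟩
    have e3 : ((TR.erase yj).filter (fun j => ¬cR j = 1 ∧ ¬cR j = 2)) = RB 3 := by
      apply Finset.filter_congr; intro j _
      have := nClass_cases (n-t-1) 1 (j:ℕ)
      simp only [hcR] at *
      constructor
      · rintro ⟨h1', h2'⟩; omega
      · intro h; omega
    rw [e2, e3] at h2
    rw [he] at h1
    simp only [hRB] at *
    omega
  -- upper bounds on class sizes
  have hUA1 : (LA 1).card + (if cL xi = 1 then 1 else 0) ≤ s - 1 := by
    have hsub : LA 1 ⊆ Finset.univ.filter (fun i : Fin n => (i:ℕ) < s - 1) := by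
      intro i hi
      rw [memLA] at hi
      simp only [Finset.mem_filter, Finset.mem_univ, true_and]
      exact (nClass_eq_one_iff _ _ _).mp hi.2.2
    have hcard : (Finset.univ.filter (fun i : Fin n => (i:ℕ) < s - 1)).card = s - 1 := by
      rw [card_filter_lt]; omega
    split_ifs with h
    · have hin : insert xi (LA 1) ⊆ Finset.univ.filter (fun i : Fin n => (i:ℕ) < s-1) := by
        intro i hi
        rcases Finset.mem_insert.mp hi with rfl | hi
        · simp only [Finset.mem_filter, Finset.mem_univ, true_and]
          exact (nClass_eq_one_iff _ _ _).mp h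
        · exact hsub hi
      have hxiLA : xi ∉ LA 1 := by rw [memLA]; tauto
      have := Finset.card_le_card hin
      rw [Finset.card_insert_of_notMem hxiLA] at this
      omega
    · have := Finset.card_le_card hsub; omega
  have cls2L : ∀ i : Fin n, cL i = 2 → (i:ℕ) = s - 1 := by
    intro i h; have := nClass_eq_two _ _ _ h; omega
  have hUA2 : (LA 2).card + (if cL xi = 2 then 1 else 0) ≤ 1 := by
    split_ifs with h
    · have : LA 2 = ∅ := by
        rw [Finset.eq_empty_iff_forall_notMem]
        intro i hi
        rw [memLA] at hi
        exact hi.1 (Fin.ext (by rw [cls2L i hi.2.2, cls2L xi h]))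
      rw [this]; simp
    · have : (LA 2).card ≤ 1 := by
        apply Finset.card_le_one.mpr
        intro a ha b hb
        rw [memLA] at ha hb
        exact Fin.ext (by rw [cls2L a ha.2.2, cls2L b hb.2.2])
      omega
  have cls2R : ∀ j : Fin n, cR j = 2 → (j:ℕ) = n - t - 1 := by
    intro j h; have := nClass_eq_two _ _ _ h; omega
  have hUB2 : (RB 2).card + (if cR yj = 2 then 1 else 0) ≤ 1 := by
    split_ifs with h
    · have : RB 2 = ∅ := by
        rw [Finset.eq_empty_iff_forall_notMem]
        intro j hj
        rw [memRB] at hj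
        exact hj.1 (Fin.ext (by rw [cls2R j hj.2.2, cls2R yj h]))
      rw [this]; simp
    · have : (RB 2).card ≤ 1 := by
        apply Finset.card_le_one.mpr
        intro a ha b hb
        rw [memRB] at ha hb
        exact Fin.ext (by rw [cls2R a ha.2.2, cls2R b hb.2.2])
      omega
  have hUB3 : (RB 3).card + (if cR yj = 3 then 1 else 0) ≤ t := by
    have hnt : n - t - 1 + 1 = n - t := by omega
    have hsub : RB 3 ⊆ Finset.univ.filter (fun j : Fin n => ¬((j:ℕ) < n - t)) := by
      intro j hj
      rw [memRB] at hj
      simp only [Finset.mem_filter, Finset.mem_univ, true_and]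
      have := nClass_eq_three _ _ _ hj.2.2
      omega
    have hcard : (Finset.univ.filter (fun j : Fin n => ¬((j:ℕ) < n - t))).card = t := by
      have h1 := Finset.card_filter_add_card_filter_not
        (s := (Finset.univ : Finset (Fin n))) (p := fun j : Fin n => (j:ℕ) < n - t)
      rw [card_filter_lt] at h1
      rw [Finset.card_univ, Fintype.card_fin] at h1
      have : min (n-t) n = n - t := by omega
      omega
    split_ifs with h
    · have hin : insert yj (RB 3) ⊆ Finset.univ.filter (fun j : Fin n => ¬((j:ℕ) < n - t)) := by
        intro j hj
        rcases Finset.mem_insert.mp hj with rfl | hj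
        · simp only [Finset.mem_filter, Finset.mem_univ, true_and]
          have := nClass_eq_three _ _ _ h
          omega
        · exact hsub hj
      have hyjRB : yj ∉ RB 3 := by rw [memRB]; tauto
      have := Finset.card_le_card hin
      rw [Finset.card_insert_of_notMem hyjRB] at this
      omega
    · have := Finset.card_le_card hsub; omega
  -- vertex lists per class
  set lA : ℕ → List (Fin n ⊕ Fin n) := fun c => ((LA c).toList).map Sum.inl with hlA
  set rB : ℕ → List (Fin n ⊕ Fin n) := fun c => ((RB c).toList).map Sum.inr with hrB
  have lenlA : ∀ c, (lA c).length = (LA c).card := by intro c; simp [hlA]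
  have lenrB : ∀ c, (rB c).length = (RB c).card := by intro c; simp [hrB]
  have memlA : ∀ c v, v ∈ lA c ↔ ∃ i, v = Sum.inl i ∧ i ∈ LA c := by
    intro c v
    simp only [hlA, List.mem_map, Finset.mem_toList]
    constructor
    · rintro ⟨i, hi, rfl⟩; exact ⟨i, rfl, hi⟩
    · rintro ⟨i, rfl, hi⟩; exact ⟨i, hi, rfl⟩
  have memrB : ∀ c v, v ∈ rB c ↔ ∃ j, v = Sum.inr j ∧ j ∈ RB c := by
    intro c v
    simp only [hrB, List.mem_map, Finset.mem_toList]
    constructor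
    · rintro ⟨j, hj, rfl⟩; exact ⟨j, rfl, hj⟩
    · rintro ⟨j, rfl, hj⟩; exact ⟨j, hj, rfl⟩
  -- blanket adjacency producers
  have fLR : ∀ (c : ℕ) (l m : List (Fin n ⊕ Fin n)),
      (∀ v ∈ l, ∃ i, v = Sum.inl i ∧ c ≤ cL i) →
      (∀ v ∈ m, ∃ j, v = Sum.inr j ∧ cR j ≤ c) →
      l.length = m.length → List.Forall₂ G.Adj l m := by
    intro c l m hl hm hlen
    refine forall₂_blanket l m hlen (fun a ha b hb => ?_)
    obtain ⟨i, rfl, hi⟩ := hl a ha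
    obtain ⟨j, rfl, hj⟩ := hm b hb
    exact adjLR i j (le_trans hj hi)
  have fRL : ∀ (c : ℕ) (m l : List (Fin n ⊕ Fin n)),
      (∀ v ∈ m, ∃ j, v = Sum.inr j ∧ cR j ≤ c) →
      (∀ v ∈ l, ∃ i, v = Sum.inl i ∧ c ≤ cL i) →
      m.length = l.length → List.Forall₂ G.Adj m l := by
    intro c m l hm hl hlen
    refine forall₂_blanket m l hlen (fun b hb a ha => ?_)
    obtain ⟨i, rfl, hi⟩ := hl a ha
    obtain ⟨j, rfl, hj⟩ := hm b hb
    exact (adjLR i j (le_trans hj hi)).symm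
  -- class bounds for list members
  have gL : ∀ c, ∀ v ∈ lA c, ∃ i, v = Sum.inl i ∧ c ≤ cL i := by
    intro c v hv
    obtain ⟨i, rfl, hi⟩ := (memlA c v).mp hv
    exact ⟨i, rfl, le_of_eq ((memLA c i).mp hi).2.2.symm⟩
  have gL1 : ∀ c, ∀ v ∈ lA c, ∃ i, v = Sum.inl i ∧ 1 ≤ cL i := by
    intro c v hv
    obtain ⟨i, rfl, _⟩ := (memlA c v).mp hv
    exact ⟨i, rfl, nClass_ge1 _ _ _⟩
  have gR : ∀ c, ∀ v ∈ rB c, ∃ j, v = Sum.inr j ∧ cR j ≤ c := by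
    intro c v hv
    obtain ⟨j, rfl, hj⟩ := (memrB c v).mp hv
    exact ⟨j, rfl, le_of_eq ((memRB c j).mp hj).2.2⟩
  have gR3 : ∀ c, ∀ v ∈ rB c, ∃ j, v = Sum.inr j ∧ cR j ≤ 3 := by
    intro c v hv
    obtain ⟨j, rfl, _⟩ := (memrB c v).mp hv
    exact ⟨j, rfl, nClass_le3 _ _ _⟩
  -- canonical nodup and coverage
  have ndlA : ∀ c, (lA c).Nodup := by
    intro c
    exact ((LA c).nodup_toList).map Sum.inl_injective
  have ndrB : ∀ c, (rB c).Nodup := by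
    intro c
    exact ((RB c).nodup_toList).map Sum.inr_injective
  have disjlA : ∀ c c', c ≠ c' → (lA c).Disjoint (lA c') := by
    intro c c' hcc v hv hv'
    obtain ⟨i, rfl, hi⟩ := (memlA c v).mp hv
    obtain ⟨i', heq, hi'⟩ := (memlA c' _).mp hv'
    cases Sum.inl_injective heq
    exact hcc (((memLA c i).mp hi).2.2 ▸ ((memLA c' i).mp hi').2.2 ▸ rfl)
  have disjrB : ∀ c c', c ≠ c' → (rB c).Disjoint (rB c') := by
    intro c c' hcc v hv hv'
    obtain ⟨j, rfl, hj⟩ := (memrB c v).mp hv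
    obtain ⟨j', heq, hj'⟩ := (memrB c' _).mp hv'
    cases Sum.inr_injective heq
    exact hcc (((memRB c j).mp hj).2.2 ▸ ((memRB c' j).mp hj').2.2 ▸ rfl)
  have xnotlA : ∀ c, Sum.inl xi ∉ lA c := by
    intro c hmem
    obtain ⟨i, heq, hi⟩ := (memlA c _).mp hmem
    cases Sum.inl_injective heq
    exact ((memLA c xi).mp hi).1 rfl
  have ynotrB : ∀ c, Sum.inr yj ∉ rB c := by
    intro c hmem
    obtain ⟨j, heq, hj⟩ := (memrB c _).mp hmem
    cases Sum.inr_injective heq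
    exact ((memRB c yj).mp hj).1 rfl
  have isInl : ∀ v ∈ Sum.inl xi :: (lA 1 ++ (lA 2 ++ lA 3)), ∃ i, v = Sum.inl i := by
    intro v hv
    rcases List.mem_cons.mp hv with rfl | hv
    · exact ⟨xi, rfl⟩
    · rcases List.mem_append.mp hv with hv | hv
      · obtain ⟨i, rfl, -⟩ := (memlA 1 v).mp hv; exact ⟨i, rfl⟩
      rcases List.mem_append.mp hv with hv | hv
      · obtain ⟨i, rfl, -⟩ := (memlA 2 v).mp hv; exact ⟨i, rfl⟩
      · obtain ⟨i, rfl, -⟩ := (memlA 3 v).mp hv; exact ⟨i, rfl⟩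
  have isInr : ∀ v ∈ (rB 1 ++ (rB 2 ++ rB 3)) ++ [Sum.inr yj], ∃ j, v = Sum.inr j := by
    intro v hv
    rcases List.mem_append.mp hv with hv | hv
    · rcases List.mem_append.mp hv with hv | hv
      · obtain ⟨j, rfl, -⟩ := (memrB 1 v).mp hv; exact ⟨j, rfl⟩
      rcases List.mem_append.mp hv with hv | hv
      · obtain ⟨j, rfl, -⟩ := (memrB 2 v).mp hv; exact ⟨j, rfl⟩
      · obtain ⟨j, rfl, -⟩ := (memrB 3 v).mp hv; exact ⟨j, rfl⟩
    · rcases List.mem_singleton.mp hv with rfl; exact ⟨yj, rfl⟩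
  have hcanNodup :
      ((Sum.inl xi :: (lA 1 ++ (lA 2 ++ lA 3))) ++ ((rB 1 ++ (rB 2 ++ rB 3)) ++ [Sum.inr yj])).Nodup := by
    rw [List.nodup_append]
    refine ⟨?_, ?_, ?_⟩
    · rw [List.nodup_cons]
      constructor
      · intro hmem
        rcases List.mem_append.mp hmem with hv | hv
        · exact xnotlA 1 hv
        rcases List.mem_append.mp hv with hv | hv
        · exact xnotlA 2 hv
        · exact xnotlA 3 hv
      · rw [List.nodup_append]
        refine ⟨ndlA 1, ?_, ?_⟩
        · rw [List.nodup_append]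
          exact ⟨ndlA 2, ndlA 3, fun a ha b hb hab => disjlA 2 3 (by norm_num) ha (hab ▸ hb)⟩
        · rintro v hv _ hv' rfl
          rcases List.mem_append.mp hv' with hv' | hv'
          · exact disjlA 1 2 (by norm_num) hv hv'
          · exact disjlA 1 3 (by norm_num) hv hv'
    · rw [List.nodup_append]
      refine ⟨?_, List.nodup_singleton _, ?_⟩
      · rw [List.nodup_append]
        refine ⟨ndrB 1, ?_, ?_⟩
        · rw [List.nodup_append]
          exact ⟨ndrB 2, ndrB 3, fun a ha b hb hab => disjrB 2 3 (by norm_num) ha (hab ▸ hb)⟩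
        · rintro v hv _ hv' rfl
          rcases List.mem_append.mp hv' with hv' | hv'
          · exact disjrB 1 2 (by norm_num) hv hv'
          · exact disjrB 1 3 (by norm_num) hv hv'
      · rintro v hv _ hv' rfl
        rcases List.mem_singleton.mp hv' with rfl
        rcases List.mem_append.mp hv with hv | hv
        · exact ynotrB 1 hv
        rcases List.mem_append.mp hv with hv | hv
        · exact ynotrB 2 hv
        · exact ynotrB 3 hv
    · rintro v hv _ hv' rfl
      obtain ⟨i, rfl⟩ := isInl v hv
      obtain ⟨j, hj⟩ := isInr _ hv'
      exact Sum.inl_ne_inr hj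
  have hcanCov : ∀ v, v ∈ ((Sum.inl xi :: (lA 1 ++ (lA 2 ++ lA 3)))
      ++ ((rB 1 ++ (rB 2 ++ rB 3)) ++ [Sum.inr yj])) ↔ v ∉ W := by
    intro v
    constructor
    · intro hv
      rcases List.mem_append.mp hv with hv | hv
      · rcases List.mem_cons.mp hv with rfl | hv
        · exact hx
        · have : ∃ c, v ∈ lA c := by
            rcases List.mem_append.mp hv with hv | hv
            · exact ⟨1, hv⟩
            rcases List.mem_append.mp hv with hv | hv
            · exact ⟨2, hv⟩
            · exact ⟨3, hv⟩
          obtain ⟨c, hc⟩ := this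
          obtain ⟨i, rfl, hi⟩ := (memlA c v).mp hc
          exact ((memLA c i).mp hi).2.1
      · rcases List.mem_append.mp hv with hv | hv
        · have : ∃ c, v ∈ rB c := by
            rcases List.mem_append.mp hv with hv | hv
            · exact ⟨1, hv⟩
            rcases List.mem_append.mp hv with hv | hv
            · exact ⟨2, hv⟩
            · exact ⟨3, hv⟩
          obtain ⟨c, hc⟩ := this
          obtain ⟨j, rfl, hj⟩ := (memrB c v).mp hc
          exact ((memRB c j).mp hj).2.1
        · rcases List.mem_singleton.mp hv with rfl
          exact hy
    · intro hv
      rw [List.mem_append]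
      match v with
      | Sum.inl i =>
        left
        rw [List.mem_cons]
        by_cases hxi : i = xi
        · exact Or.inl (by rw [hxi])
        · right
          have hmem : i ∈ LA (cL i) := (memLA _ i).mpr ⟨hxi, hv, rfl⟩
          rcases nClass_cases (s-1) 1 (i:ℕ) with hc | hc | hc <;>
            [ (exact List.mem_append.mpr (Or.inl ((memlA 1 _).mpr ⟨i, rfl, hc ▸ hmem⟩)));
              (exact List.mem_append.mpr (Or.inr (List.mem_append.mpr (Or.inl
                ((memlA 2 _).mpr ⟨i, rfl, hc ▸ hmem⟩)))));
              (exact List.mem_append.mpr (Or.inr (List.mem_append.mpr (Or.inr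
                ((memlA 3 _).mpr ⟨i, rfl, hc ▸ hmem⟩)))))]
      | Sum.inr j =>
        right
        rw [List.mem_append]
        by_cases hyj : j = yj
        · exact Or.inr (by rw [hyj]; simp)
        · left
          have hmem : j ∈ RB (cR j) := (memRB _ j).mpr ⟨hyj, hv, rfl⟩
          rcases nClass_cases (n-t-1) 1 (j:ℕ) with hc | hc | hc <;>
            [ (exact List.mem_append.mpr (Or.inl ((memrB 1 _).mpr ⟨j, rfl, hc ▸ hmem⟩)));
              (exact List.mem_append.mpr (Or.inr (List.mem_append.mpr (Or.inl
                ((memrB 2 _).mpr ⟨j, rfl, hc ▸ hmem⟩)))));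
              (exact List.mem_append.mpr (Or.inr (List.mem_append.mpr (Or.inr
                ((memrB 3 _).mpr ⟨j, rfl, hc ▸ hmem⟩)))))]
  have tad : ∀ (l x : List (Fin n ⊕ Fin n)) (k : ℕ), l.take k ++ (l.drop k ++ x) = l ++ x := by
    intro l x k
    rw [← List.append_assoc, List.take_append_drop]
  have three_split : ∀ (l : List (Fin n ⊕ Fin n)) (m k : ℕ), m ≤ k →
      l = l.take m ++ ((l.take k).drop m ++ l.drop k) := by
    intro l m k h
    conv_lhs => rw [← List.take_append_drop k l, ← List.take_append_drop m (l.take k)]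
    rw [List.take_take, min_eq_left h, List.append_assoc]
  have four_split : ∀ (l : List (Fin n ⊕ Fin n)) (m1 m2 m3 : ℕ), m1 ≤ m2 → m2 ≤ m3 →
      l = l.take m1 ++ ((l.take m2).drop m1 ++ ((l.take m3).drop m2 ++ l.drop m3)) := by
    intro l m1 m2 m3 h12 h23
    conv_lhs => rw [three_split l m2 m3 h23]
    have h' : l.take m2 = l.take m1 ++ (l.take m2).drop m1 := by
      conv_lhs => rw [← List.take_append_drop m1 (l.take m2)]
      rw [List.take_take, min_eq_left h12]
    conv_lhs => rw [h']
    rw [List.append_assoc]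
  have mem_take_app : ∀ {l₁ l₂ : List (Fin n ⊕ Fin n)} {d : ℕ}, d ≤ l₁.length →
      ∀ v ∈ (l₁ ++ l₂).take d, v ∈ l₁ := by
    intro l₁ l₂ d h v hv
    rw [List.take_append_of_le_length h] at hv
    exact List.mem_of_mem_take hv
  have mem_drop_app : ∀ {l₁ l₂ : List (Fin n ⊕ Fin n)} {d : ℕ}, l₁.length ≤ d →
      ∀ v ∈ (l₁ ++ l₂).drop d, v ∈ l₂ := by
    intro l₁ l₂ d h v hv
    rw [show d = l₁.length + (d - l₁.length) by omega, List.drop_length_add_append] at hv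
    exact List.mem_of_mem_drop hv
  rcases nClass_cases (s-1) 1 (xi:ℕ) with hcx | hcx | hcx
  · -- Case cx = 1 : ascending lefts, ascending rights
    have hcx1 : cL xi = 1 := hcx
    rw [if_pos hcx1] at hUA1
    have hUA2' : (LA 2).card ≤ 1 := by split_ifs at hUA2 <;> omega
    have hUB2' : (RB 2).card ≤ 1 := by split_ifs at hUB2 <;> omega
    have hUB3' : (RB 3).card ≤ t := by split_ifs at hUB3 <;> omega
    have hb1 : (LA 1).card + 1 ≤ (RB 1).card := by omega
    have hb12 : (LA 1).card + 1 + (LA 2).card ≤ (RB 1).card + (RB 2).card := by omega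
    set Z1 := (rB 1).take ((LA 1).card + 1) with hZ1
    set M := (rB 1).drop ((LA 1).card + 1) ++ rB 2 with hM
    set Z2 := M.take (LA 2).card with hZ2
    set Z3 := M.drop (LA 2).card ++ rB 3 with hZ3
    set L := (Sum.inl xi :: lA 1) ++ (lA 2 ++ lA 3) with hLdef
    set R := Z1 ++ (Z2 ++ (Z3 ++ [Sum.inr yj])) with hRdef
    have hlZ1 : Z1.length = (LA 1).card + 1 := by
      rw [hZ1, List.length_take, lenrB]; omega
    have hlM : M.length = (RB 1).card - ((LA 1).card + 1) + (RB 2).card := by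
      rw [hM]; simp [lenrB]
    have hlZ2 : Z2.length = (LA 2).card := by
      rw [hZ2, List.length_take, hlM]; omega
    have hlZ3 : Z3.length = M.length - (LA 2).card + (RB 3).card := by
      rw [hZ3]; simp [lenrB]
    have h23 : Z2 ++ Z3 = M ++ rB 3 := by
      rw [hZ2, hZ3, ← List.append_assoc, List.take_append_drop]
    have hReq : Z1 ++ (Z2 ++ Z3) = rB 1 ++ (rB 2 ++ rB 3) := by
      rw [h23, hZ1, hM, List.append_assoc, tad]
    have hR' : R = (rB 1 ++ (rB 2 ++ rB 3)) ++ [Sum.inr yj] := by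
      rw [hRdef, ← hReq]; simp [List.append_assoc]
    have hLc : L = Sum.inl xi :: (lA 1 ++ (lA 2 ++ lA 3)) := by
      rw [hLdef]; simp [List.cons_append]
    have hlen : L.length = R.length := by
      rw [hLc, hR']
      simp only [List.length_cons, List.length_append, List.length_nil, lenlA, lenrB]
      omega
    have hhead : L.head? = some (Sum.inl xi) := by rw [hLc]; rfl
    have hlast : R.getLast? = some (Sum.inr yj) := by rw [hR', List.getLast?_concat]
    have f1 : List.Forall₂ G.Adj (Sum.inl xi :: lA 1) Z1 := by
      apply fLR 1
      · intro v hv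
        rcases List.mem_cons.mp hv with rfl | hv
        · exact ⟨xi, rfl, le_of_eq hcx1.symm⟩
        · exact gL1 1 v hv
      · intro v hv
        rw [hZ1] at hv
        exact gR 1 v (List.mem_of_mem_take hv)
      · simp [hlZ1, lenlA]
    have f2 : List.Forall₂ G.Adj (lA 2) Z2 := by
      apply fLR 2
      · exact gL 2
      · intro v hv
        rw [hZ2] at hv
        have hv' := List.mem_of_mem_take hv
        rw [hM] at hv'
        rcases List.mem_append.mp hv' with hv' | hv'
        · obtain ⟨j, rfl, hj⟩ := gR 1 v (List.mem_of_mem_drop hv')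
          exact ⟨j, rfl, hj.trans (by norm_num)⟩
        · exact gR 2 v hv'
      · rw [lenlA, hlZ2]
    have f3 : List.Forall₂ G.Adj (lA 3) (Z3 ++ [Sum.inr yj]) := by
      apply fLR 3
      · exact gL 3
      · intro v hv
        rcases List.mem_append.mp hv with hv | hv
        · rw [hZ3] at hv
          rcases List.mem_append.mp hv with hv | hv
          · have hv' := List.mem_of_mem_drop hv
            rw [hM] at hv'
            rcases List.mem_append.mp hv' with hv' | hv'
            · exact gR3 1 v (List.mem_of_mem_drop hv')
            · exact gR3 2 v hv'
          · exact gR3 3 v hv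
        · rcases List.mem_singleton.mp hv with rfl
          exact ⟨yj, rfl, nClass_le3 _ _ _⟩
      · simp only [List.length_append, List.length_singleton, lenlA, hlZ3, hlM]
        omega
    have h1 : List.Forall₂ G.Adj L R := by
      rw [hLdef, hRdef]
      exact List.rel_append f1 (List.rel_append f2 f3)
    have hdl : R.dropLast = rB 1 ++ (rB 2 ++ rB 3) := by rw [hR', List.dropLast_concat]
    have htl : L.tail = lA 1 ++ (lA 2 ++ lA 3) := by rw [hLdef]; simp [List.cons_append]
    have hQlen : (rB 1 ++ (rB 2 ++ rB 3)).length = s + t := by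
      simp only [List.length_append, lenrB]; omega
    have g1 : List.Forall₂ G.Adj ((rB 1 ++ (rB 2 ++ rB 3)).take (LA 1).card) (lA 1) := by
      apply fRL 1
      · intro v hv
        exact gR 1 v (mem_take_app (by rw [lenrB]; omega) v hv)
      · exact gL1 1
      · rw [List.length_take, hQlen, lenlA]; omega
    have g2 : List.Forall₂ G.Adj
        (((rB 1 ++ (rB 2 ++ rB 3)).take ((LA 1).card + (LA 2).card)).drop (LA 1).card)
        (lA 2) := by
      apply fRL 1
      · intro v hv
        have hv' := List.mem_of_mem_drop hv
        exact gR 1 v (mem_take_app (by rw [lenrB]; omega) v hv')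
      · exact gL1 2
      · rw [List.length_drop, List.length_take, hQlen, lenlA]; omega
    have g3 : List.Forall₂ G.Adj
        ((rB 1 ++ (rB 2 ++ rB 3)).drop ((LA 1).card + (LA 2).card)) (lA 3) := by
      apply fRL 3
      · intro v hv
        have hv' := List.mem_of_mem_drop hv
        rcases List.mem_append.mp hv' with hv' | hv'
        · exact gR3 1 v hv'
        rcases List.mem_append.mp hv' with hv' | hv'
        · exact gR3 2 v hv'
        · exact gR3 3 v hv'
      · exact gL 3
      · rw [List.length_drop, hQlen, lenlA]; omega
    have h2 : List.Forall₂ G.Adj R.dropLast L.tail := by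
      rw [hdl, htl]
      rw [three_split (rB 1 ++ (rB 2 ++ rB 3)) (LA 1).card ((LA 1).card + (LA 2).card)
        (by omega)]
      exact List.rel_append g1 (List.rel_append g2 g3)
    have hnd : (L ++ R).Nodup := by rw [hLc, hR']; exact hcanNodup
    have hcov : ∀ v, v ∈ L ++ R ↔ v ∉ W := by
      intro v; rw [hLc, hR']; exact hcanCov v
    exact finish G W L R (Sum.inl xi) (Sum.inr yj) hx hy hlen hhead hlast h1 h2 hnd hcov
  · -- Case cx = 2
    have hcx2 : cL xi = 2 := hcx
    rw [if_pos hcx2] at hUA2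
    rw [if_neg (by rw [hcx2]; norm_num)] at hUA1
    have hLA2e : LA 2 = ∅ := Finset.card_eq_zero.mp (by omega)
    have hlA2e : lA 2 = [] := by rw [hlA]; simp [hLA2e]
    rw [hlA2e, List.nil_append] at hcanNodup hcanCov
    -- common construction for cy ∈ {2,3}
    have main2A : (LA 1).card + 1 ≤ (RB 1).card →
        ∃ w : (G.induce {v : Fin n ⊕ Fin n | v ∉ W}).Walk ⟨Sum.inl xi, hx⟩ ⟨Sum.inr yj, hy⟩,
          w.IsHamiltonian := by
      intro hKey
      have hrB1ne : rB 1 ≠ [] := by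
        intro h
        have := congrArg List.length h
        rw [lenrB] at this
        simp only [List.length_nil, List.length_cons] at this
        omega
      obtain ⟨r0, rB1t, hr1⟩ := List.exists_cons_of_ne_nil hrB1ne
      have hlt : rB1t.length = (RB 1).card - 1 := by
        have := congrArg List.length hr1
        rw [lenrB] at this
        simp only [List.length_nil, List.length_cons] at this
        omega
      set C1 := rB1t.take (LA 1).card with hC1
      set C3 := rB1t.drop (LA 1).card ++ (rB 2 ++ rB 3) with hC3
      set L := (Sum.inl xi :: lA 1) ++ lA 3 with hLdef
      set R := (r0 :: C1) ++ (C3 ++ [Sum.inr yj]) with hRdef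
      have hReq : (r0 :: C1) ++ C3 = rB 1 ++ (rB 2 ++ rB 3) := by
        rw [hC1, hC3, List.cons_append, tad, ← List.cons_append, ← hr1]
      have hR' : R = (rB 1 ++ (rB 2 ++ rB 3)) ++ [Sum.inr yj] := by
        rw [hRdef, ← hReq]; simp [List.append_assoc]
      have hLc : L = Sum.inl xi :: (lA 1 ++ lA 3) := by
        rw [hLdef]; simp [List.cons_append]
      have hlen : L.length = R.length := by
        rw [hLc, hR']
        simp only [List.length_cons, List.length_append, List.length_nil, lenlA, lenrB]
        omega
      have hhead : L.head? = some (Sum.inl xi) := by rw [hLc]; rfl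
      have hlast : R.getLast? = some (Sum.inr yj) := by rw [hR', List.getLast?_concat]
      have f1 : List.Forall₂ G.Adj (Sum.inl xi :: lA 1) (r0 :: C1) := by
        apply fLR 1
        · intro v hv
          rcases List.mem_cons.mp hv with rfl | hv
          · exact ⟨xi, rfl, by rw [hcx2]; norm_num⟩
          · exact gL1 1 v hv
        · intro v hv
          rcases List.mem_cons.mp hv with rfl | hv
          · exact gR 1 v (by rw [hr1]; exact List.mem_cons_self)
          · rw [hC1] at hv
            exact gR 1 v (by rw [hr1]; exact List.mem_cons_of_mem _ (List.mem_of_mem_take hv))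
        · simp only [List.length_cons, lenlA, hC1, List.length_take, hlt]
          omega
      have f3 : List.Forall₂ G.Adj (lA 3) (C3 ++ [Sum.inr yj]) := by
        apply fLR 3
        · exact gL 3
        · intro v hv
          rcases List.mem_append.mp hv with hv | hv
          · rw [hC3] at hv
            rcases List.mem_append.mp hv with hv | hv
            · exact gR3 1 v (by rw [hr1]; exact List.mem_cons_of_mem _ (List.mem_of_mem_drop hv))
            rcases List.mem_append.mp hv with hv | hv
            · exact gR3 2 v hv
            · exact gR3 3 v hv
          · rcases List.mem_singleton.mp hv with rfl
            exact ⟨yj, rfl, nClass_le3 _ _ _⟩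
        · simp only [List.length_append, List.length_cons, List.length_nil, lenlA, hC3,
            List.length_drop, hlt, lenrB]
          omega
      have h1 : List.Forall₂ G.Adj L R := by
        rw [hLdef, hRdef]
        exact List.rel_append f1 f3
      have hdl : R.dropLast = rB 1 ++ (rB 2 ++ rB 3) := by rw [hR', List.dropLast_concat]
      have htl : L.tail = lA 1 ++ lA 3 := by rw [hLdef]; simp [List.cons_append]
      have hQlen : (rB 1 ++ (rB 2 ++ rB 3)).length = s + t := by
        simp only [List.length_append, lenrB]; omega
      have g1 : List.Forall₂ G.Adj ((rB 1 ++ (rB 2 ++ rB 3)).take (LA 1).card) (lA 1) := by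
        apply fRL 1
        · intro v hv
          exact gR 1 v (mem_take_app (by rw [lenrB]; omega) v hv)
        · exact gL1 1
        · rw [List.length_take, hQlen, lenlA]; omega
      have g3 : List.Forall₂ G.Adj ((rB 1 ++ (rB 2 ++ rB 3)).drop (LA 1).card) (lA 3) := by
        apply fRL 3
        · intro v hv
          have hv' := List.mem_of_mem_drop hv
          rcases List.mem_append.mp hv' with hv' | hv'
          · exact gR3 1 v hv'
          rcases List.mem_append.mp hv' with hv' | hv'
          · exact gR3 2 v hv'
          · exact gR3 3 v hv'
        · exact gL 3
        · rw [List.length_drop, hQlen, lenlA]; omega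
      have h2 : List.Forall₂ G.Adj R.dropLast L.tail := by
        rw [hdl, htl, ← List.take_append_drop (LA 1).card (rB 1 ++ (rB 2 ++ rB 3))]
        exact List.rel_append g1 g3
      have hnd : (L ++ R).Nodup := by rw [hLc, hR']; exact hcanNodup
      have hcov : ∀ v, v ∈ L ++ R ↔ v ∉ W := by
        intro v; rw [hLc, hR']; exact hcanCov v
      exact finish G W L R (Sum.inl xi) (Sum.inr yj) hx hy hlen hhead hlast h1 h2 hnd hcov
    rcases nClass_cases (n-t-1) 1 (yj:ℕ) with hcy | hcy | hcy
    · -- cy = 1 : descending construction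
      have hcy1 : cR yj = 1 := hcy
      rw [if_neg (by rw [hcy1]; norm_num)] at hUB2
      rw [if_neg (by rw [hcy1]; norm_num)] at hUB3
      have hn1 : (RB 3).card + 1 ≤ (LA 3).card := by omega
      have hb2opt : rB 2 = [] ∨ ∃ w2, rB 2 = [w2] := by
        have hlen2 : (rB 2).length ≤ 1 := by rw [lenrB]; omega
        match hL2 : rB 2 with
        | [] => exact Or.inl rfl
        | [w] => exact Or.inr ⟨w, rfl⟩
        | a :: b :: l => rw [hL2] at hlen2; simp at hlen2
      obtain ⟨r0, rest, hsplitR, hr0c, hrestc⟩ :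
          ∃ r0 rest, (rB 2 ++ rB 1) = r0 :: rest ∧ (∃ j, r0 = Sum.inr j ∧ cR j ≤ 2)
            ∧ (∀ v ∈ rest, ∃ j, v = Sum.inr j ∧ cR j ≤ 1) := by
        rcases hb2opt with h2e | ⟨w2, h2w⟩
        · have hrB1ne : rB 1 ≠ [] := by
            intro h
            have := congrArg List.length h
            rw [lenrB] at this
            simp only [List.length_nil, List.length_cons] at this
            omega
          obtain ⟨r0, rB1t, hr1⟩ := List.exists_cons_of_ne_nil hrB1ne
          refine ⟨r0, rB1t, by rw [h2e, List.nil_append, hr1], ?_, ?_⟩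
          · obtain ⟨j, rfl, hj⟩ := gR 1 r0 (by rw [hr1]; exact List.mem_cons_self)
            exact ⟨j, rfl, hj.trans (by norm_num)⟩
          · intro v hv
            exact gR 1 v (by rw [hr1]; exact List.mem_cons_of_mem _ hv)
        · refine ⟨w2, rB 1, by rw [h2w]; rfl, ?_, ?_⟩
          · exact gR 2 w2 (by rw [h2w]; exact List.mem_singleton_self _)
          · exact gR 1
      have hrest_len : rest.length = (RB 2).card + (RB 1).card - 1 := by
        have := congrArg List.length hsplitR
        simp only [List.length_append, List.length_cons, lenrB] at this
        omega
      set X := rB 3 ++ (rest ++ [Sum.inr yj]) with hX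
      have hXlen : X.length = s + t := by
        simp only [hX, List.length_append, List.length_cons, List.length_nil, lenrB, hrest_len]
        omega
      have hXmem : ∀ v ∈ X, ∃ j, v = Sum.inr j ∧ cR j ≤ 3 := by
        intro v hv
        rw [hX] at hv
        rcases List.mem_append.mp hv with hv | hv
        · exact gR3 3 v hv
        rcases List.mem_append.mp hv with hv | hv
        · obtain ⟨j, rfl, hj⟩ := hrestc v hv
          exact ⟨j, rfl, hj.trans (by norm_num)⟩
        · rcases List.mem_singleton.mp hv with rfl
          exact ⟨yj, rfl, nClass_le3 _ _ _⟩
      set L := [Sum.inl xi] ++ (lA 3 ++ lA 1) with hLdef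
      set R := [r0] ++ (X.take (LA 3).card ++ X.drop (LA 3).card) with hRdef
      have hR' : R = ([r0] ++ (rB 3 ++ rest)) ++ [Sum.inr yj] := by
        rw [hRdef, List.take_append_drop, hX]
        simp [List.append_assoc]
      have hlen : L.length = R.length := by
        rw [hLdef, hRdef]
        simp only [List.length_append, List.length_cons, List.length_nil, List.length_take,
          List.length_drop, lenlA, hXlen]
        omega
      have hhead : L.head? = some (Sum.inl xi) := by rw [hLdef]; rfl
      have hlast : R.getLast? = some (Sum.inr yj) := by rw [hR', List.getLast?_concat]
      have f0 : List.Forall₂ G.Adj [Sum.inl xi] [r0] := by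
        obtain ⟨j, rfl, hj⟩ := hr0c
        refine List.Forall₂.cons (adjLR xi j ?_) List.Forall₂.nil
        rw [hcx2]; exact hj
      have f1 : List.Forall₂ G.Adj (lA 3) (X.take (LA 3).card) := by
        apply fLR 3
        · exact gL 3
        · intro v hv
          exact hXmem v (List.mem_of_mem_take hv)
        · rw [lenlA, List.length_take, hXlen]
          omega
      have f2 : List.Forall₂ G.Adj (lA 1) (X.drop (LA 3).card) := by
        apply fLR 1
        · exact gL1 1
        · intro v hv
          rw [hX] at hv
          have hv' := mem_drop_app (by rw [lenrB]; omega) v hv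
          rcases List.mem_append.mp hv' with hv' | hv'
          · exact hrestc v hv'
          · rcases List.mem_singleton.mp hv' with rfl
            exact ⟨yj, rfl, le_of_eq hcy1⟩
        · rw [lenlA, List.length_drop, hXlen]
          omega
      have h1 : List.Forall₂ G.Adj L R := by
        rw [hLdef, hRdef]
        exact List.rel_append f0 (List.rel_append f1 f2)
      have hdl : R.dropLast = [r0] ++ (rB 3 ++ rest) := by rw [hR', List.dropLast_concat]
      have htl : L.tail = lA 3 ++ lA 1 := by rw [hLdef]; rfl
      have hQlen : ([r0] ++ (rB 3 ++ rest)).length = s + t := by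
        simp only [List.length_append, List.length_cons, List.length_nil, lenrB, hrest_len]
        omega
      have hQmem : ∀ v ∈ [r0] ++ (rB 3 ++ rest), ∃ j, v = Sum.inr j ∧ cR j ≤ 3 := by
        intro v hv
        rcases List.mem_append.mp hv with hv | hv
        · rcases List.mem_singleton.mp hv with rfl
          obtain ⟨j, rfl, hj⟩ := hr0c
          exact ⟨j, rfl, hj.trans (by norm_num)⟩
        rcases List.mem_append.mp hv with hv | hv
        · exact gR3 3 v hv
        · obtain ⟨j, rfl, hj⟩ := hrestc v hv
          exact ⟨j, rfl, hj.trans (by norm_num)⟩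
      have q1 : List.Forall₂ G.Adj (([r0] ++ (rB 3 ++ rest)).take (LA 3).card) (lA 3) := by
        apply fRL 3
        · intro v hv
          exact hQmem v (List.mem_of_mem_take hv)
        · exact gL 3
        · rw [List.length_take, hQlen, lenlA]; omega
      have q2 : List.Forall₂ G.Adj (([r0] ++ (rB 3 ++ rest)).drop (LA 3).card) (lA 1) := by
        apply fRL 1
        · intro v hv
          rw [show [r0] ++ (rB 3 ++ rest) = ([r0] ++ rB 3) ++ rest by
            simp [List.append_assoc]] at hv
          have hv' := mem_drop_app (by
            simp only [List.length_append, List.length_cons, List.length_nil, lenrB]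
            omega) v hv
          exact hrestc v hv'
        · exact gL1 1
        · rw [List.length_drop, hQlen, lenlA]; omega
      have h2 : List.Forall₂ G.Adj R.dropLast L.tail := by
        rw [hdl, htl, ← List.take_append_drop (LA 3).card ([r0] ++ (rB 3 ++ rest))]
        exact List.rel_append q1 q2
      have hpL : L.Perm (Sum.inl xi :: (lA 1 ++ lA 3)) := by
        rw [hLdef, show Sum.inl xi :: (lA 1 ++ lA 3) = [Sum.inl xi] ++ (lA 1 ++ lA 3) from rfl]
        refine perm_of_ms ?_
        simp only [← Multiset.coe_add]
        abel
      have hpR : R.Perm ((rB 1 ++ (rB 2 ++ rB 3)) ++ [Sum.inr yj]) := by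
        rw [hR']
        apply List.Perm.append_right
        refine perm_of_ms ?_
        have hms : (↑(rB 2) + ↑(rB 1) : Multiset (Fin n ⊕ Fin n)) = ↑[r0] + ↑rest := by
          rw [Multiset.coe_add, hsplitR, show r0 :: rest = [r0] ++ rest from rfl,
            ← Multiset.coe_add]
        simp only [← Multiset.coe_add]
        rw [show ((rB 1 : Multiset (Fin n ⊕ Fin n)) + (↑(rB 2) + ↑(rB 3))) =
          (↑(rB 2) + ↑(rB 1)) + ↑(rB 3) by abel, hms]
        abel
      have hpLR := hpL.append hpR
      have hnd : (L ++ R).Nodup := (hpLR.nodup_iff).mpr hcanNodup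
      have hcov : ∀ v, v ∈ L ++ R ↔ v ∉ W := by
        intro v; rw [hpLR.mem_iff]; exact hcanCov v
      exact finish G W L R (Sum.inl xi) (Sum.inr yj) hx hy hlen hhead hlast h1 h2 hnd hcov
    · -- cy = 2
      rw [if_pos (show cR yj = 2 from hcy)] at hUB2
      have hUB3' : (RB 3).card ≤ t := by split_ifs at hUB3 <;> omega
      exact main2A (by omega)
    · -- cy = 3
      rw [if_pos (show cR yj = 3 from hcy)] at hUB3
      have hUB2' : (RB 2).card ≤ 1 := by split_ifs at hUB2 <;> omega
      exact main2A (by omega)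
  · -- Case cx = 3
    have hcx3 : cL xi = 3 := hcx
    rw [if_neg (by rw [hcx3]; norm_num)] at hUA1
    rw [if_neg (by rw [hcx3]; norm_num)] at hUA2
    -- the common "reserve" construction, used for cy = 3 and (cy = 2, no class-2 left)
    have main3C : (RB 3).card + 1 ≤ (LA 3).card →
        (RB 3).card + (RB 2).card + 1 ≤ (LA 3).card + (LA 2).card →
        ∃ w : (G.induce {v : Fin n ⊕ Fin n | v ∉ W}).Walk ⟨Sum.inl xi, hx⟩ ⟨Sum.inr yj, hy⟩,
          w.IsHamiltonian := by
      intro hn1 hn2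
      have hlA3ne : lA 3 ≠ [] := by
        intro h
        have := congrArg List.length h
        rw [lenlA] at this
        simp only [List.length_nil] at this
        omega
      obtain ⟨e3, la3t, he3⟩ := List.exists_cons_of_ne_nil hlA3ne
      have hla3len : la3t.length = (LA 3).card - 1 := by
        have := congrArg List.length he3
        rw [lenlA] at this
        simp only [List.length_cons] at this
        omega
      have he3mem : e3 ∈ lA 3 := by rw [he3]; exact List.mem_cons_self
      have hla3tmem : ∀ v ∈ la3t, v ∈ lA 3 := by
        intro v hv; rw [he3]; exact List.mem_cons_of_mem _ hv
      set X := rB 3 ++ (rB 2 ++ rB 1) with hXdef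
      have hXlen : X.length = s + t := by
        simp only [hXdef, List.length_append, lenrB]; omega
      have hXmem : ∀ v ∈ X, ∃ j, v = Sum.inr j ∧ cR j ≤ 3 := by
        intro v hv
        rw [hXdef] at hv
        rcases List.mem_append.mp hv with hv | hv
        · exact gR3 3 v hv
        rcases List.mem_append.mp hv with hv | hv
        · exact gR3 2 v hv
        · exact gR3 1 v hv
      set L := (Sum.inl xi :: la3t) ++ (lA 2 ++ (lA 1 ++ [e3])) with hLdef
      set R := X ++ [Sum.inr yj] with hRdef
      have hXYmem : ∀ v ∈ R, ∃ j, v = Sum.inr j ∧ cR j ≤ 3 := by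
        intro v hv
        rw [hRdef] at hv
        rcases List.mem_append.mp hv with hv | hv
        · exact hXmem v hv
        · rcases List.mem_singleton.mp hv with rfl
          exact ⟨yj, rfl, nClass_le3 _ _ _⟩
      have hRlen : R.length = s + t + 1 := by
        rw [hRdef]; simp only [List.length_append, List.length_cons, List.length_nil, hXlen]
      have hlen : L.length = R.length := by
        rw [hLdef, hRlen]
        simp only [List.length_append, List.length_cons, List.length_nil, lenlA, hla3len]
        omega
      have hhead : L.head? = some (Sum.inl xi) := by rw [hLdef]; rfl
      have hlast : R.getLast? = some (Sum.inr yj) := by rw [hRdef, List.getLast?_concat]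
      -- forward alignment
      have f1 : List.Forall₂ G.Adj (Sum.inl xi :: la3t) (R.take (LA 3).card) := by
        apply fLR 3
        · intro v hv
          rcases List.mem_cons.mp hv with rfl | hv
          · exact ⟨xi, rfl, le_of_eq hcx3.symm⟩
          · exact gL 3 v (hla3tmem v hv)
        · intro v hv
          exact hXYmem v (List.mem_of_mem_take hv)
        · rw [List.length_take, hRlen]
          simp only [List.length_cons, hla3len]
          omega
      have f2 : List.Forall₂ G.Adj (lA 2)
          ((R.take ((LA 3).card + (LA 2).card)).drop (LA 3).card) := by
        apply fLR 2
        · exact gL 2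
        · intro v hv
          rw [hRdef, List.take_append_of_le_length (by rw [hXlen]; omega),
            List.drop_take] at hv
          have hv' := List.mem_of_mem_take hv
          rw [hXdef] at hv'
          have hv2 := mem_drop_app (by rw [lenrB]; omega) v hv'
          rcases List.mem_append.mp hv2 with hv2 | hv2
          · exact gR 2 v hv2
          · obtain ⟨j, rfl, hj⟩ := gR 1 v hv2
            exact ⟨j, rfl, hj.trans (by norm_num)⟩
        · rw [List.length_drop, List.length_take, hRlen, lenlA]
          omega
      have f3 : List.Forall₂ G.Adj (lA 1)
          ((R.take ((LA 3).card + (LA 2).card + (LA 1).card)).drop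
            ((LA 3).card + (LA 2).card)) := by
        apply fLR 1
        · exact gL1 1
        · intro v hv
          rw [hRdef, List.take_append_of_le_length (by rw [hXlen]; omega),
            List.drop_take] at hv
          have hv' := List.mem_of_mem_take hv
          rw [show X = (rB 3 ++ rB 2) ++ rB 1 by rw [hXdef, List.append_assoc]] at hv'
          have hv2 := mem_drop_app (by
            simp only [List.length_append, lenrB]; omega) v hv'
          exact gR 1 v hv2
        · rw [List.length_drop, List.length_take, hRlen, lenlA]
          omega
      have f4 : List.Forall₂ G.Adj [e3]
          (R.drop ((LA 3).card + (LA 2).card + (LA 1).card)) := by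
        apply fLR 3
        · intro v hv
          rcases List.mem_singleton.mp hv with rfl
          exact gL 3 v he3mem
        · intro v hv
          exact hXYmem v (List.mem_of_mem_drop hv)
        · rw [List.length_drop, hRlen]
          simp only [List.length_cons, List.length_nil]
          omega
      have h1 : List.Forall₂ G.Adj L R := by
        conv_rhs => rw [four_split R (LA 3).card ((LA 3).card + (LA 2).card)
          ((LA 3).card + (LA 2).card + (LA 1).card) (by omega) (by omega)]
        rw [hLdef]
        exact List.rel_append f1 (List.rel_append f2 (List.rel_append f3 f4))
      -- backward alignment
      have hdl : R.dropLast = X := by rw [hRdef, List.dropLast_concat]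
      have htl : L.tail = la3t ++ (lA 2 ++ (lA 1 ++ [e3])) := by rw [hLdef]; rfl
      have q1 : List.Forall₂ G.Adj (X.take ((LA 3).card - 1)) la3t := by
        apply fRL 3
        · intro v hv
          exact hXmem v (List.mem_of_mem_take hv)
        · intro v hv
          exact gL 3 v (hla3tmem v hv)
        · rw [List.length_take, hXlen, hla3len]
          omega
      have q2 : List.Forall₂ G.Adj
          ((X.take ((LA 3).card - 1 + (LA 2).card)).drop ((LA 3).card - 1)) (lA 2) := by
        apply fRL 2
        · intro v hv
          rw [List.drop_take] at hv
          have hv' := List.mem_of_mem_take hv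
          rw [hXdef] at hv'
          have hv2 := mem_drop_app (by rw [lenrB]; omega) v hv'
          rcases List.mem_append.mp hv2 with hv2 | hv2
          · exact gR 2 v hv2
          · obtain ⟨j, rfl, hj⟩ := gR 1 v hv2
            exact ⟨j, rfl, hj.trans (by norm_num)⟩
        · exact gL 2
        · rw [List.length_drop, List.length_take, hXlen, lenlA]
          omega
      have q3 : List.Forall₂ G.Adj
          ((X.take ((LA 3).card - 1 + (LA 2).card + (LA 1).card)).drop
            ((LA 3).card - 1 + (LA 2).card)) (lA 1) := by
        apply fRL 1
        · intro v hv
          rw [List.drop_take] at hv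
          have hv' := List.mem_of_mem_take hv
          rw [show X = (rB 3 ++ rB 2) ++ rB 1 by rw [hXdef, List.append_assoc]] at hv'
          have hv2 := mem_drop_app (by
            simp only [List.length_append, lenrB]; omega) v hv'
          exact gR 1 v hv2
        · exact gL1 1
        · rw [List.length_drop, List.length_take, hXlen, lenlA]
          omega
      have q4 : List.Forall₂ G.Adj
          (X.drop ((LA 3).card - 1 + (LA 2).card + (LA 1).card)) [e3] := by
        apply fRL 3
        · intro v hv
          exact hXmem v (List.mem_of_mem_drop hv)
        · intro v hv
          rcases List.mem_singleton.mp hv with rfl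
          exact gL 3 v he3mem
        · rw [List.length_drop, hXlen]
          simp only [List.length_cons, List.length_nil]
          omega
      have h2 : List.Forall₂ G.Adj R.dropLast L.tail := by
        rw [hdl, htl]
        conv_lhs => rw [four_split X ((LA 3).card - 1) ((LA 3).card - 1 + (LA 2).card)
          ((LA 3).card - 1 + (LA 2).card + (LA 1).card) (by omega) (by omega)]
        exact List.rel_append q1 (List.rel_append q2 (List.rel_append q3 q4))
      have hpL : L.Perm (Sum.inl xi :: (lA 1 ++ (lA 2 ++ lA 3))) := by
        rw [hLdef, he3,
          show Sum.inl xi :: la3t = [Sum.inl xi] ++ la3t from rfl,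
          show Sum.inl xi :: (lA 1 ++ (lA 2 ++ (e3 :: la3t)))
            = [Sum.inl xi] ++ (lA 1 ++ (lA 2 ++ ([e3] ++ la3t))) from rfl]
        refine perm_of_ms ?_
        simp only [← Multiset.coe_add]
        abel
      have hpR : R.Perm ((rB 1 ++ (rB 2 ++ rB 3)) ++ [Sum.inr yj]) := by
        rw [hRdef]
        apply List.Perm.append_right
        rw [hXdef]
        refine perm_of_ms ?_
        simp only [← Multiset.coe_add]
        abel
      have hpLR := hpL.append hpR
      have hnd : (L ++ R).Nodup := (hpLR.nodup_iff).mpr hcanNodup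
      have hcov : ∀ v, v ∈ L ++ R ↔ v ∉ W := by
        intro v; rw [hpLR.mem_iff]; exact hcanCov v
      exact finish G W L R (Sum.inl xi) (Sum.inr yj) hx hy hlen hhead hlast h1 h2 hnd hcov
    rcases nClass_cases (n-t-1) 1 (yj:ℕ) with hcy | hcy | hcy
    · -- cy = 1 : fully descending construction
      have hcy1 : cR yj = 1 := hcy
      rw [if_neg (by rw [hcy1]; norm_num)] at hUB2
      rw [if_neg (by rw [hcy1]; norm_num)] at hUB3
      set X := rB 3 ++ (rB 2 ++ rB 1) with hXdef
      have hXlen : X.length = s + t := by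
        simp only [hXdef, List.length_append, lenrB]; omega
      have hXmem : ∀ v ∈ X, ∃ j, v = Sum.inr j ∧ cR j ≤ 3 := by
        intro v hv
        rw [hXdef] at hv
        rcases List.mem_append.mp hv with hv | hv
        · exact gR3 3 v hv
        rcases List.mem_append.mp hv with hv | hv
        · exact gR3 2 v hv
        · exact gR3 1 v hv
      set L := (Sum.inl xi :: lA 3) ++ (lA 2 ++ lA 1) with hLdef
      set R := X ++ [Sum.inr yj] with hRdef
      have hRlen : R.length = s + t + 1 := by
        rw [hRdef]; simp only [List.length_append, List.length_cons, List.length_nil, hXlen]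
      have hXYmem : ∀ v ∈ R, ∃ j, v = Sum.inr j ∧ cR j ≤ 3 := by
        intro v hv
        rw [hRdef] at hv
        rcases List.mem_append.mp hv with hv | hv
        · exact hXmem v hv
        · rcases List.mem_singleton.mp hv with rfl
          exact ⟨yj, rfl, nClass_le3 _ _ _⟩
      have hlen : L.length = R.length := by
        rw [hLdef, hRlen]
        simp only [List.length_append, List.length_cons, lenlA]
        omega
      have hhead : L.head? = some (Sum.inl xi) := by rw [hLdef]; rfl
      have hlast : R.getLast? = some (Sum.inr yj) := by rw [hRdef, List.getLast?_concat]
      have f1 : List.Forall₂ G.Adj (Sum.inl xi :: lA 3) (R.take ((LA 3).card + 1)) := by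
        apply fLR 3
        · intro v hv
          rcases List.mem_cons.mp hv with rfl | hv
          · exact ⟨xi, rfl, le_of_eq hcx3.symm⟩
          · exact gL 3 v hv
        · intro v hv
          exact hXYmem v (List.mem_of_mem_take hv)
        · rw [List.length_take, hRlen]
          simp only [List.length_cons, lenlA]
          omega
      have f2 : List.Forall₂ G.Adj (lA 2)
          ((R.take ((LA 3).card + 1 + (LA 2).card)).drop ((LA 3).card + 1)) := by
        apply fLR 2
        · exact gL 2
        · intro v hv
          rw [List.drop_take] at hv
          have hv' := List.mem_of_mem_take hv
          rw [hRdef, hXdef, List.append_assoc] at hv'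
          have hv2 := mem_drop_app (by rw [lenrB]; omega) v hv'
          rcases List.mem_append.mp hv2 with hv2 | hv2
          · rcases List.mem_append.mp hv2 with hv2 | hv2
            · exact gR 2 v hv2
            · obtain ⟨j, rfl, hj⟩ := gR 1 v hv2
              exact ⟨j, rfl, hj.trans (by norm_num)⟩
          · rcases List.mem_singleton.mp hv2 with rfl
            exact ⟨yj, rfl, by rw [hcy1]; norm_num⟩
        · rw [List.length_drop, List.length_take, hRlen, lenlA]
          omega
      have f3 : List.Forall₂ G.Adj (lA 1)
          (R.drop ((LA 3).card + 1 + (LA 2).card)) := by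
        apply fLR 1
        · exact gL1 1
        · intro v hv
          rw [hRdef, hXdef] at hv
          rw [show (rB 3 ++ (rB 2 ++ rB 1)) ++ [Sum.inr yj]
            = (rB 3 ++ rB 2) ++ (rB 1 ++ [Sum.inr yj]) by simp [List.append_assoc]] at hv
          have hv2 := mem_drop_app (by
            simp only [List.length_append, lenrB]; omega) v hv
          rcases List.mem_append.mp hv2 with hv2 | hv2
          · exact gR 1 v hv2
          · rcases List.mem_singleton.mp hv2 with rfl
            exact ⟨yj, rfl, le_of_eq hcy1⟩
        · rw [List.length_drop, hRlen, lenlA]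
          omega
      have h1 : List.Forall₂ G.Adj L R := by
        conv_rhs => rw [three_split R ((LA 3).card + 1) ((LA 3).card + 1 + (LA 2).card)
          (by omega)]
        rw [hLdef]
        exact List.rel_append f1 (List.rel_append f2 f3)
      have hdl : R.dropLast = X := by rw [hRdef, List.dropLast_concat]
      have htl : L.tail = lA 3 ++ (lA 2 ++ lA 1) := by rw [hLdef]; rfl
      have q1 : List.Forall₂ G.Adj (X.take (LA 3).card) (lA 3) := by
        apply fRL 3
        · intro v hv
          exact hXmem v (List.mem_of_mem_take hv)
        · exact gL 3
        · rw [List.length_take, hXlen, lenlA]; omega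
      have q2 : List.Forall₂ G.Adj
          ((X.take ((LA 3).card + (LA 2).card)).drop (LA 3).card) (lA 2) := by
        apply fRL 2
        · intro v hv
          rw [List.drop_take] at hv
          have hv' := List.mem_of_mem_take hv
          rw [hXdef] at hv'
          have hv2 := mem_drop_app (by rw [lenrB]; omega) v hv'
          rcases List.mem_append.mp hv2 with hv2 | hv2
          · exact gR 2 v hv2
          · obtain ⟨j, rfl, hj⟩ := gR 1 v hv2
            exact ⟨j, rfl, hj.trans (by norm_num)⟩
        · exact gL 2
        · rw [List.length_drop, List.length_take, hXlen, lenlA]; omega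
      have q3 : List.Forall₂ G.Adj (X.drop ((LA 3).card + (LA 2).card)) (lA 1) := by
        apply fRL 1
        · intro v hv
          rw [show X = (rB 3 ++ rB 2) ++ rB 1 by rw [hXdef, List.append_assoc]] at hv
          have hv2 := mem_drop_app (by
            simp only [List.length_append, lenrB]; omega) v hv
          exact gR 1 v hv2
        · exact gL1 1
        · rw [List.length_drop, hXlen, lenlA]; omega
      have h2 : List.Forall₂ G.Adj R.dropLast L.tail := by
        rw [hdl, htl]
        conv_lhs => rw [three_split X (LA 3).card ((LA 3).card + (LA 2).card) (by omega)]
        exact List.rel_append q1 (List.rel_append q2 q3)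
      have hpL : L.Perm (Sum.inl xi :: (lA 1 ++ (lA 2 ++ lA 3))) := by
        rw [hLdef,
          show Sum.inl xi :: lA 3 = [Sum.inl xi] ++ lA 3 from rfl,
          show Sum.inl xi :: (lA 1 ++ (lA 2 ++ lA 3))
            = [Sum.inl xi] ++ (lA 1 ++ (lA 2 ++ lA 3)) from rfl]
        refine perm_of_ms ?_
        simp only [← Multiset.coe_add]
        abel
      have hpR : R.Perm ((rB 1 ++ (rB 2 ++ rB 3)) ++ [Sum.inr yj]) := by
        rw [hRdef]
        apply List.Perm.append_right
        rw [hXdef]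
        refine perm_of_ms ?_
        simp only [← Multiset.coe_add]
        abel
      have hpLR := hpL.append hpR
      have hnd : (L ++ R).Nodup := (hpLR.nodup_iff).mpr hcanNodup
      have hcov : ∀ v, v ∈ L ++ R ↔ v ∉ W := by
        intro v; rw [hpLR.mem_iff]; exact hcanCov v
      exact finish G W L R (Sum.inl xi) (Sum.inr yj) hx hy hlen hhead hlast h1 h2 hnd hcov
    · -- cy = 2
      have hcy2 : cR yj = 2 := hcy
      rw [if_pos hcy2] at hUB2
      have hUB3' : (RB 3).card ≤ t := by split_ifs at hUB3 <;> omega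
      have h02 : (LA 2).card = 0 ∨ (LA 2).card = 1 := by omega
      rcases h02 with h02 | h02
      · exact main3C (by omega) (by omega)
      · -- cy = 2 with a class-2 left present: put it at the end
        obtain ⟨e2, he2⟩ := Finset.card_eq_one.mp h02
        have hlA2s : lA 2 = [Sum.inl e2] := by rw [hlA]; simp [he2]
        have he2cls : cL e2 = 2 := by
          have : e2 ∈ LA 2 := by rw [he2]; exact Finset.mem_singleton_self _
          exact ((memLA 2 e2).mp this).2.2
        have hrB2e : rB 2 = [] := by
          rw [hrB]
          have : RB 2 = ∅ := Finset.card_eq_zero.mp (by omega)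
          simp [this]
        set X := rB 3 ++ rB 1 with hXdef
        have hXlen : X.length = s + t := by
          simp only [hXdef, List.length_append, lenrB]; omega
        have hXmem : ∀ v ∈ X, ∃ j, v = Sum.inr j ∧ cR j ≤ 3 := by
          intro v hv
          rw [hXdef] at hv
          rcases List.mem_append.mp hv with hv | hv
          · exact gR3 3 v hv
          · exact gR3 1 v hv
        have hynotX : Sum.inr yj ∉ X := by
          intro hmem
          rw [hXdef] at hmem
          rcases List.mem_append.mp hmem with hmem | hmem
          · exact ynotrB 3 hmem
          · exact ynotrB 1 hmem
        set L := (Sum.inl xi :: lA 3) ++ (lA 1 ++ [Sum.inl e2]) with hLdef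
        set R := X ++ [Sum.inr yj] with hRdef
        have hRlen : R.length = s + t + 1 := by
          rw [hRdef]; simp only [List.length_append, List.length_cons, List.length_nil, hXlen]
        have hXYmem : ∀ v ∈ R, ∃ j, v = Sum.inr j ∧ cR j ≤ 3 := by
          intro v hv
          rw [hRdef] at hv
          rcases List.mem_append.mp hv with hv | hv
          · exact hXmem v hv
          · rcases List.mem_singleton.mp hv with rfl
            exact ⟨yj, rfl, nClass_le3 _ _ _⟩
        have hlen : L.length = R.length := by
          rw [hLdef, hRlen]
          simp only [List.length_append, List.length_cons, List.length_nil, lenlA]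
          omega
        have hhead : L.head? = some (Sum.inl xi) := by rw [hLdef]; rfl
        have hlast : R.getLast? = some (Sum.inr yj) := by rw [hRdef, List.getLast?_concat]
        have f1 : List.Forall₂ G.Adj (Sum.inl xi :: lA 3) (R.take ((LA 3).card + 1)) := by
          apply fLR 3
          · intro v hv
            rcases List.mem_cons.mp hv with rfl | hv
            · exact ⟨xi, rfl, le_of_eq hcx3.symm⟩
            · exact gL 3 v hv
          · intro v hv
            exact hXYmem v (List.mem_of_mem_take hv)
          · rw [List.length_take, hRlen]
            simp only [List.length_cons, lenlA]
            omega
        have f2 : List.Forall₂ G.Adj (lA 1)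
            ((R.take ((LA 3).card + 1 + (LA 1).card)).drop ((LA 3).card + 1)) := by
          apply fLR 1
          · exact gL1 1
          · intro v hv
            rw [hRdef, List.take_append_of_le_length (by rw [hXlen]; omega),
              List.drop_take] at hv
            have hv' := List.mem_of_mem_take hv
            rw [hXdef] at hv'
            have hv2 := mem_drop_app (by rw [lenrB]; omega) v hv'
            exact gR 1 v hv2
          · rw [List.length_drop, List.length_take, hRlen, lenlA]
            omega
        have f3 : List.Forall₂ G.Adj [Sum.inl e2]
            (R.drop ((LA 3).card + 1 + (LA 1).card)) := by
          apply fLR 2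
          · intro v hv
            rcases List.mem_singleton.mp hv with rfl
            exact ⟨e2, rfl, le_of_eq he2cls.symm⟩
          · intro v hv
            rw [hRdef] at hv
            have hv2 := mem_drop_app (by rw [hXlen]; omega) v hv
            rcases List.mem_singleton.mp hv2 with rfl
            exact ⟨yj, rfl, le_of_eq hcy2⟩
          · rw [List.length_drop, hRlen]
            simp only [List.length_cons, List.length_nil]
            omega
        have h1 : List.Forall₂ G.Adj L R := by
          conv_rhs => rw [three_split R ((LA 3).card + 1) ((LA 3).card + 1 + (LA 1).card)
            (by omega)]
          rw [hLdef]
          exact List.rel_append f1 (List.rel_append f2 f3)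
        have hdl : R.dropLast = X := by rw [hRdef, List.dropLast_concat]
        have htl : L.tail = lA 3 ++ (lA 1 ++ [Sum.inl e2]) := by rw [hLdef]; rfl
        have q1 : List.Forall₂ G.Adj (X.take (LA 3).card) (lA 3) := by
          apply fRL 3
          · intro v hv
            exact hXmem v (List.mem_of_mem_take hv)
          · exact gL 3
          · rw [List.length_take, hXlen, lenlA]; omega
        have q2 : List.Forall₂ G.Adj
            ((X.take ((LA 3).card + (LA 1).card)).drop (LA 3).card) (lA 1) := by
          apply fRL 1
          · intro v hv
            rw [List.drop_take] at hv
            have hv' := List.mem_of_mem_take hv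
            rw [hXdef] at hv'
            have hv2 := mem_drop_app (by rw [lenrB]; omega) v hv'
            exact gR 1 v hv2
          · exact gL1 1
          · rw [List.length_drop, List.length_take, hXlen, lenlA]; omega
        have q3 : List.Forall₂ G.Adj (X.drop ((LA 3).card + (LA 1).card)) [Sum.inl e2] := by
          apply fRL 1
          · intro v hv
            rw [hXdef] at hv
            have hv2 := mem_drop_app (by rw [lenrB]; omega) v hv
            exact gR 1 v hv2
          · intro v hv
            rcases List.mem_singleton.mp hv with rfl
            exact ⟨e2, rfl, by rw [he2cls]; norm_num⟩
          · rw [List.length_drop, hXlen]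
            simp only [List.length_cons, List.length_nil]
            omega
        have h2 : List.Forall₂ G.Adj R.dropLast L.tail := by
          rw [hdl, htl]
          conv_lhs => rw [three_split X (LA 3).card ((LA 3).card + (LA 1).card) (by omega)]
          exact List.rel_append q1 (List.rel_append q2 q3)
        have hpL : L.Perm (Sum.inl xi :: (lA 1 ++ (lA 2 ++ lA 3))) := by
          rw [hLdef, hlA2s,
            show Sum.inl xi :: lA 3 = [Sum.inl xi] ++ lA 3 from rfl,
            show Sum.inl xi :: (lA 1 ++ ([Sum.inl e2] ++ lA 3))
              = [Sum.inl xi] ++ (lA 1 ++ ([Sum.inl e2] ++ lA 3)) from rfl]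
          refine perm_of_ms ?_
          simp only [← Multiset.coe_add]
          abel
        have hpR : R.Perm ((rB 1 ++ (rB 2 ++ rB 3)) ++ [Sum.inr yj]) := by
          rw [hRdef]
          apply List.Perm.append_right
          rw [hXdef, hrB2e, List.nil_append]
          refine perm_of_ms ?_
          simp only [← Multiset.coe_add]
          abel
        have hpLR := hpL.append hpR
        have hnd : (L ++ R).Nodup := (hpLR.nodup_iff).mpr hcanNodup
        have hcov : ∀ v, v ∈ L ++ R ↔ v ∉ W := by
          intro v; rw [hpLR.mem_iff]; exact hcanCov v
        exact finish G W L R (Sum.inl xi) (Sum.inr yj) hx hy hlen hhead hlast h1 h2 hnd hcov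
    · -- cy = 3
      have hcy3 : cR yj = 3 := hcy
      rw [if_pos hcy3] at hUB3
      have hUB2' : (RB 2).card ≤ 1 := by split_ifs at hUB2 <;> omega
      exact main3C (by omega) (by omega)
end

section
/- Let G be a balanced bipartite graph of order 2n with minimum degree δ(G) ≥ k, where 1 ≤ k ≤ (n−2)/3. If e(G) > n(n−k) + k², then G is Hamiltonian. -/
open SimpleGraph Finset
set_option linter.unusedSectionVars false

namespace Stmt16Aux

variable {V : Type*} [DecidableEq V]

/-- U1 -/
lemma getVert_mem_support {H : SimpleGraph V} {a b : V} (p : H.Walk a b) (i : ℕ) :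
    p.getVert i ∈ p.support := by
  induction p generalizing i with
  | nil => cases i <;> simp [SimpleGraph.Walk.getVert]
  | cons h q ih =>
    cases i with
    | zero => simp [SimpleGraph.Walk.getVert]
    | succ n =>
      rw [SimpleGraph.Walk.getVert_cons_succ, SimpleGraph.Walk.support_cons]
      exact List.mem_cons_of_mem _ (ih n)

/-- U4 -/
lemma mem_support_iff_exists_getVert {H : SimpleGraph V} {a b w : V} (p : H.Walk a b) :
    w ∈ p.support ↔ ∃ i, i ≤ p.length ∧ p.getVert i = w := by
  constructor
  · intro hw
    induction p with
    | nil =>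
      simp only [SimpleGraph.Walk.support_nil, List.mem_singleton] at hw
      exact ⟨0, le_refl _, hw.symm⟩
    | cons h q ih =>
      rw [SimpleGraph.Walk.support_cons, List.mem_cons] at hw
      rcases hw with rfl | hw
      · exact ⟨0, by simp [SimpleGraph.Walk.getVert]⟩
      · obtain ⟨i, hi, hg⟩ := ih hw
        exact ⟨i + 1, by simpa using hi, by simpa [SimpleGraph.Walk.getVert_cons_succ] using hg⟩
  · rintro ⟨i, _, rfl⟩
    exact getVert_mem_support p i

/-- U3 -/
lemma IsPath.getVert_injOn {H : SimpleGraph V} {a b : V} {p : H.Walk a b} (hp : p.IsPath) :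
    ∀ i ≤ p.length, ∀ j ≤ p.length, p.getVert i = p.getVert j → i = j := by
  induction p with
  | nil =>
    intro i hi j hj _
    simp only [SimpleGraph.Walk.length_nil, Nat.le_zero] at hi hj
    omega
  | @cons x y z h q ih =>
    rw [SimpleGraph.Walk.cons_isPath_iff] at hp
    intro i hi j hj hij
    rw [SimpleGraph.Walk.length_cons] at hi hj
    match i, j with
    | 0, 0 => rfl
    | 0, j + 1 =>
      exfalso
      apply hp.2
      have h0 : (Walk.cons h q).getVert 0 = x := SimpleGraph.Walk.getVert_zero _
      rw [h0, SimpleGraph.Walk.getVert_cons_succ] at hij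
      exact hij ▸ getVert_mem_support q j
    | i + 1, 0 =>
      exfalso
      apply hp.2
      have h0 : (Walk.cons h q).getVert 0 = x := SimpleGraph.Walk.getVert_zero _
      rw [h0, SimpleGraph.Walk.getVert_cons_succ] at hij
      exact hij.symm ▸ getVert_mem_support q i
    | i + 1, j + 1 =>
      rw [SimpleGraph.Walk.getVert_cons_succ, SimpleGraph.Walk.getVert_cons_succ] at hij
      have := ih hp.1 i (by omega) j (by omega) hij
      omega

/-- U5 -/
lemma mem_edges_iff_exists {H : SimpleGraph V} {a b : V} (p : H.Walk a b) (e : Sym2 V) :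
    e ∈ p.edges ↔ ∃ m, m < p.length ∧ s(p.getVert m, p.getVert (m + 1)) = e := by
  induction p with
  | nil => simp
  | cons h q ih =>
    rw [SimpleGraph.Walk.edges_cons, List.mem_cons, ih]
    constructor
    · rintro (rfl | ⟨m, hm, rfl⟩)
      · exact ⟨0, by simp [SimpleGraph.Walk.getVert_cons_succ, SimpleGraph.Walk.getVert_zero]⟩
      · exact ⟨m + 1, by simp [SimpleGraph.Walk.getVert_cons_succ]; omega,
          by simp [SimpleGraph.Walk.getVert_cons_succ]⟩
    · rintro ⟨m, hm, rfl⟩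
      cases m with
      | zero => left; simp [SimpleGraph.Walk.getVert_cons_succ, SimpleGraph.Walk.getVert_zero]
      | succ m =>
        right
        refine ⟨m, by simp at hm; omega, by simp [SimpleGraph.Walk.getVert_cons_succ]⟩



variable {V : Type*} [DecidableEq V]

/-- SPLIT: split a walk at index `i`. -/
lemma exists_split {H : SimpleGraph V} {a b : V} (p : H.Walk a b) (i : ℕ) (hi : i ≤ p.length) :
    ∃ (q : H.Walk a (p.getVert i)) (r : H.Walk (p.getVert i) b),
      p = q.append r ∧ q.length = i := by
  induction p generalizing i with
  | nil =>
    simp only [SimpleGraph.Walk.length_nil, Nat.le_zero] at hi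
    subst hi
    exact ⟨Walk.nil, Walk.nil, rfl, rfl⟩
  | @cons x y z h q ih =>
    cases i with
    | zero => exact ⟨Walk.nil, Walk.cons h q, rfl, rfl⟩
    | succ n =>
      rw [SimpleGraph.Walk.length_cons] at hi
      obtain ⟨q1, q2, heq, hlen⟩ := ih n (by omega)
      rw [SimpleGraph.Walk.getVert_cons_succ]
      exact ⟨Walk.cons h q1, q2, by rw [SimpleGraph.Walk.cons_append, ← heq],
        by rw [SimpleGraph.Walk.length_cons, hlen]⟩

/-- The closure lemma H1: closing a hamiltonian path with an edge gives a hamiltonian cycle. -/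
lemma closure_isHamiltonianCycle [Fintype V] {H : SimpleGraph V} {a b : V} {p : H.Walk a b}
    (hp : p.IsHamiltonian) (h : H.Adj b a) (hcard : 3 ≤ Fintype.card V) :
    (Walk.cons h p).IsHamiltonianCycle := by
  have hpath : p.IsPath := hp.isPath
  have hL : p.length = Fintype.card V - 1 := hp.length_eq
  have hL2 : 2 ≤ p.length := by omega
  rw [SimpleGraph.Walk.isHamiltonianCycle_iff_isCycle_and_support_count_tail_eq_one]
  constructor
  · rw [SimpleGraph.Walk.cons_isCycle_iff]
    refine ⟨hpath, fun he => ?_⟩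
    rw [mem_edges_iff_exists] at he
    obtain ⟨m, hm, hme⟩ := he
    rw [Sym2.eq_iff] at hme
    rcases hme with ⟨hb, ha⟩ | ⟨ha, hb⟩
    · have : m = p.length := by
        apply IsPath.getVert_injOn hpath m (by omega) p.length (le_refl _)
        rw [hb, SimpleGraph.Walk.getVert_length]
      omega
    · have hm0 : m = 0 := by
        apply IsPath.getVert_injOn hpath m (by omega) 0 (by omega)
        rw [ha, SimpleGraph.Walk.getVert_zero]
      have : m + 1 = p.length := by
        apply IsPath.getVert_injOn hpath (m+1) (by omega) p.length (le_refl _)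
        rw [hb, SimpleGraph.Walk.getVert_length]
      omega
  · intro z
    rw [SimpleGraph.Walk.support_cons, List.tail_cons]
    exact hp z

/-- Rotating a hamiltonian cycle. -/
lemma IsHamiltonianCycle.rotate {H : SimpleGraph V} {a u : V} {c : H.Walk a a}
    (hc : c.IsHamiltonianCycle) (hu : u ∈ c.support) :
    (c.rotate _ hu).IsHamiltonianCycle := by
  rw [SimpleGraph.Walk.isHamiltonianCycle_iff_isCycle_and_support_count_tail_eq_one]
  refine ⟨hc.isCycle.rotate hu, fun z => ?_⟩
  have hperm : ((c.rotate _ hu).support.tail).Perm (c.support.tail) :=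
    (SimpleGraph.Walk.support_rotate c _ hu).perm
  rw [hperm.count_eq]
  rw [SimpleGraph.Walk.isHamiltonianCycle_iff_isCycle_and_support_count_tail_eq_one] at hc
  exact hc.2 z

/-- Reversing a hamiltonian cycle. -/
lemma IsHamiltonianCycle.reverse {H : SimpleGraph V} {a : V} {c : H.Walk a a}
    (hc : c.IsHamiltonianCycle) : c.reverse.IsHamiltonianCycle := by
  have hcount : ∀ z, c.reverse.support.tail.count z = 1 := by
    intro z
    have h1 : c.reverse.support = a :: c.reverse.support.tail :=
      SimpleGraph.Walk.support_eq_cons _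
    have h2 : c.reverse.support.count z = c.support.count z := by
      rw [SimpleGraph.Walk.support_reverse, List.count_reverse]
    have h3 : c.support.count z = (if z = a then 2 else 1) := by
      split
      · next hz => subst hz; exact hc.count_support_self
      · next hz => exact hc.support_count_of_ne (Ne.symm hz)
    have h4 : c.reverse.support.count z
        = (if z = a then 1 else 0) + c.reverse.support.tail.count z := by
      conv_lhs => rw [h1]
      rw [List.count_cons]
      by_cases hz : z = a
      · simp [hz, Nat.add_comm]
      · simp [hz, Ne.symm hz]
    rw [h2, h3] at h4
    by_cases hz : z = a
    · rw [if_pos hz, if_pos hz] at h4; omega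
    · rw [if_neg hz, if_neg hz] at h4; omega
  rw [SimpleGraph.Walk.isHamiltonianCycle_iff_isCycle_and_support_count_tail_eq_one]
  refine ⟨?_, hcount⟩
  rw [SimpleGraph.Walk.isCycle_def]
  refine ⟨SimpleGraph.Walk.IsTrail.reverse _ hc.isCycle.isCircuit.isTrail, ?_, ?_⟩
  · intro hnil
    apply hc.isCycle.ne_nil
    have := congrArg SimpleGraph.Walk.reverse hnil
    rwa [SimpleGraph.Walk.reverse_reverse, SimpleGraph.Walk.reverse_nil] at this
  · rw [List.nodup_iff_count_le_one]
    intro z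
    exact le_of_eq (hcount z)


/-- The rotation lemma: a hamiltonian path plus crossing chords gives a hamiltonian cycle. -/
lemma rotation [Fintype V] {H : SimpleGraph V} {u v : V} {p : H.Walk u v}
    (hp : p.IsHamiltonian) (hcard : 3 ≤ Fintype.card V) {j : ℕ} (hj : j + 1 ≤ p.length)
    (hu : H.Adj u (p.getVert (j + 1))) (hv : H.Adj v (p.getVert j)) :
    H.IsHamiltonian := by
  classical
  have hpath : p.IsPath := hp.isPath
  obtain ⟨T, D, hTD, hTlen⟩ := exists_split p (j + 1) hj
  obtain ⟨T', D', hTD', hT'len⟩ := exists_split p j (by omega)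
  have hplen : p.length = (j + 1) + D.length := by
    have h := congrArg SimpleGraph.Walk.length hTD
    rwa [SimpleGraph.Walk.length_append, hTlen] at h
  have hDget : ∀ r, D.getVert r = p.getVert (j + 1 + r) := by
    intro r
    have h := congrArg (fun w : H.Walk u v => w.getVert (j + 1 + r)) hTD
    simp only [SimpleGraph.Walk.getVert_append, hTlen] at h
    rw [if_neg (by omega), Nat.add_sub_cancel_left] at h
    exact h.symm
  have hT'get : ∀ s, s ≤ j → T'.getVert s = p.getVert s := by
    intro s hs
    rcases Nat.lt_or_ge s j with hlt | hge
    · have h := congrArg (fun w : H.Walk u v => w.getVert s) hTD'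
      simp only [SimpleGraph.Walk.getVert_append, hT'len] at h
      rw [if_pos hlt] at h
      exact h.symm
    · have hsj : s = j := by omega
      subst hsj
      have h := SimpleGraph.Walk.getVert_length T'
      rwa [hT'len] at h
  have hDpath : D.IsPath := SimpleGraph.Walk.IsPath.of_append_right (hTD ▸ hpath)
  have hT'path : T'.IsPath := SimpleGraph.Walk.IsPath.of_append_left (hTD' ▸ hpath)
  set C : H.Walk (p.getVert (j + 1)) u := D.append (Walk.cons hv T'.reverse) with hC
  have hCsup : C.support = D.support ++ T'.reverse.support := by
    rw [hC, SimpleGraph.Walk.support_append, SimpleGraph.Walk.support_cons, List.tail_cons]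
  have hmemD : ∀ z, z ∈ D.support → ∃ m, j + 1 ≤ m ∧ m ≤ p.length ∧ p.getVert m = z := by
    intro z hz
    obtain ⟨r, hr, hrz⟩ := (mem_support_iff_exists_getVert D).mp hz
    exact ⟨j + 1 + r, by omega, by omega, by rw [← hDget]; exact hrz⟩
  have hmemT' : ∀ z, z ∈ T'.support → ∃ s, s ≤ j ∧ p.getVert s = z := by
    intro z hz
    obtain ⟨s, hs, hsz⟩ := (mem_support_iff_exists_getVert T').mp hz
    rw [hT'len] at hs
    exact ⟨s, hs, by rw [← hT'get s hs]; exact hsz⟩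
  have hCnodup : C.support.Nodup := by
    rw [hCsup]
    refine List.Nodup.append ((SimpleGraph.Walk.isPath_def _).mp hDpath)
      ((SimpleGraph.Walk.isPath_def _).mp hT'path.reverse) ?_
    intro z hz1 hz2
    rw [SimpleGraph.Walk.support_reverse, List.mem_reverse] at hz2
    obtain ⟨m, hm1, hm2, hmz⟩ := hmemD z hz1
    obtain ⟨s, hs, hsz⟩ := hmemT' z hz2
    have : m = s := IsPath.getVert_injOn hpath m hm2 s (by omega) (by rw [hmz, hsz])
    omega
  have hCmem : ∀ z, z ∈ C.support := by
    intro z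
    obtain ⟨m, hm, hmz⟩ := (mem_support_iff_exists_getVert p).mp (hp.mem_support z)
    rw [hCsup, List.mem_append]
    rcases Nat.lt_or_ge m (j + 1) with hlt | hge
    · right
      rw [SimpleGraph.Walk.support_reverse, List.mem_reverse]
      rw [mem_support_iff_exists_getVert]
      exact ⟨m, by omega, by rw [hT'get m (by omega)]; exact hmz⟩
    · left
      rw [mem_support_iff_exists_getVert]
      exact ⟨m - (j + 1), by omega, by rw [hDget, Nat.add_sub_cancel' hge]; exact hmz⟩
  have hCham : C.IsHamiltonian :=
    ((SimpleGraph.Walk.isPath_def _).mpr hCnodup).isHamiltonian_of_mem hCmem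
  have hcyc := closure_isHamiltonianCycle hCham hu hcard
  exact fun _ => ⟨u, _, hcyc⟩


/-- Alternation of parts along a walk in a bipartite graph. -/
lemma walk_parity {H : SimpleGraph V} {X Y : Finset V} (hdisj : Disjoint X Y)
    (hbipH : ∀ u v, H.Adj u v → (u ∈ X ∧ v ∈ Y) ∨ (u ∈ Y ∧ v ∈ X))
    {a b : V} (p : H.Walk a b) (ha : a ∈ X) :
    ∀ i, i ≤ p.length → (Even i → p.getVert i ∈ X) ∧ (¬Even i → p.getVert i ∈ Y) := by
  intro i
  induction i with
  | zero =>
    intro _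
    refine ⟨fun _ => by simpa using ha, fun h => absurd (by simp : Even 0) h⟩
  | succ m ih =>
    intro hm
    have hadj := p.adj_getVert_succ (by omega : m < p.length)
    have hm' := ih (by omega)
    rcases hbipH _ _ hadj with ⟨h1, h2⟩ | ⟨h1, h2⟩
    · have hmeven : Even m := by
        by_contra hodd
        exact Finset.disjoint_left.mp hdisj h1 (hm'.2 hodd)
      refine ⟨fun he => ?_, fun _ => h2⟩
      rw [Nat.even_add_one] at he
      exact absurd hmeven he
    · have hmodd : ¬Even m := by
        intro heven
        exact Finset.disjoint_left.mp hdisj (hm'.1 heven) h1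
      refine ⟨fun _ => h2, fun ho => ?_⟩
      rw [Nat.even_add_one, not_not] at ho
      exact absurd ho hmodd

/-- Ore-type conclusion from a hamiltonian path between nonadjacent vertices
in a non-hamiltonian balanced bipartite graph. -/
lemma ore_of_hampath [Fintype V] {H : SimpleGraph V} [DecidableRel H.Adj]
    {X Y : Finset V} {n : ℕ} (hdisj : Disjoint X Y) (hcov : X ∪ Y = Finset.univ)
    (hX : X.card = n) (hY : Y.card = n) (hn : 2 ≤ n)
    (hbipH : ∀ u v, H.Adj u v → (u ∈ X ∧ v ∈ Y) ∨ (u ∈ Y ∧ v ∈ X))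
    {u v : V} (hu : u ∈ X) (hv : v ∈ Y)
    (hne : ¬H.Adj u v) (hnH : ¬H.IsHamiltonian)
    (p : H.Walk u v) (hp : p.IsHamiltonian) :
    H.degree u + H.degree v ≤ n := by
  classical
  have hcardV : Fintype.card V = 2 * n := by
    rw [← Finset.card_univ, ← hcov, Finset.card_union_of_disjoint hdisj, hX, hY]
    omega
  have hcard3 : 3 ≤ Fintype.card V := by omega
  have hL : p.length = 2 * n - 1 := by rw [hp.length_eq, hcardV]
  have hexists : ∀ w : V, ∃ i, i ≤ p.length ∧ p.getVert i = w := by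
    intro w
    exact (mem_support_iff_exists_getVert p).mp (hp.mem_support w)
  set idx : V → ℕ := fun w => (hexists w).choose with hidxdef
  have hidx : ∀ w : V, idx w ≤ p.length ∧ p.getVert (idx w) = w :=
    fun w => (hexists w).choose_spec
  have parity := walk_parity hdisj hbipH p hu
  have hxy : ∀ w, w ∈ X → w ∈ Y → False := fun w h1 h2 => Finset.disjoint_left.mp hdisj h1 h2
  have hNuY : ∀ w ∈ H.neighborFinset u, w ∈ Y := by
    intro w hw
    rw [SimpleGraph.mem_neighborFinset] at hw
    rcases hbipH _ _ hw with ⟨_, h2⟩ | ⟨h1, _⟩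
    · exact h2
    · exact absurd h1 (fun h => hxy u hu h)
  have hNvX : ∀ w ∈ H.neighborFinset v, w ∈ X := by
    intro w hw
    rw [SimpleGraph.mem_neighborFinset] at hw
    rcases hbipH _ _ hw with ⟨h1, _⟩ | ⟨_, h2⟩
    · exact absurd h1 (fun h => hxy v h hv)
    · exact h2
  set Du := (H.neighborFinset u).image idx with hDu
  set Dv := (H.neighborFinset v).image (fun w => idx w + 1) with hDv
  have hinj : ∀ (s : Finset V), Set.InjOn idx ↑s := by
    intro s w1 _ w2 _ h
    have e1 := (hidx w1).2
    have e2 := (hidx w2).2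
    rw [← e1, ← e2, h]
  have hcardDu : Du.card = H.degree u := by
    rw [hDu, Finset.card_image_of_injOn (hinj _), SimpleGraph.card_neighborFinset_eq_degree]
  have hcardDv : Dv.card = H.degree v := by
    rw [hDv, Finset.card_image_of_injOn, SimpleGraph.card_neighborFinset_eq_degree]
    intro w1 h1 w2 h2 h
    simp only at h
    exact hinj _ h1 h2 (by omega)
  have hDuodd : ∀ i ∈ Du, ¬Even i ∧ i ≤ p.length := by
    intro i hi
    rw [hDu, Finset.mem_image] at hi
    obtain ⟨w, hw, rfl⟩ := hi
    have h1 := (hidx w).1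
    refine ⟨fun he => ?_, h1⟩
    exact hxy _ ((parity _ h1).1 he) ((hidx w).2.symm ▸ hNuY w hw)
  have hDvodd : ∀ i ∈ Dv, ¬Even i ∧ i ≤ p.length := by
    intro i hi
    rw [hDv, Finset.mem_image] at hi
    obtain ⟨w, hw, rfl⟩ := hi
    have h1 := (hidx w).1
    have hwX : w ∈ X := hNvX w hw
    have heven : Even (idx w) := by
      by_contra hodd
      exact hxy _ hwX ((hidx w).2 ▸ (parity _ h1).2 hodd)
    have hne' : idx w ≠ p.length := by
      intro hEq
      apply hxy v
      · have : p.getVert (idx w) = w := (hidx w).2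
        rw [hEq, SimpleGraph.Walk.getVert_length] at this
        exact this ▸ hwX
      · exact hv
    refine ⟨?_, by omega⟩
    rw [Nat.even_add_one, not_not]
    exact heven
  have hdisjD : Disjoint Du Dv := by
    rw [Finset.disjoint_left]
    intro i hiu hiv
    rw [hDu, Finset.mem_image] at hiu
    rw [hDv, Finset.mem_image] at hiv
    obtain ⟨w1, hw1, hw1i⟩ := hiu
    obtain ⟨w2, hw2, hw2i⟩ := hiv
    have hadju : H.Adj u (p.getVert i) := by
      rw [← hw1i, (hidx w1).2]
      exact (SimpleGraph.mem_neighborFinset _ _ _).mp hw1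
    have hadjv : H.Adj v (p.getVert (idx w2)) := by
      rw [(hidx w2).2]
      exact (SimpleGraph.mem_neighborFinset _ _ _).mp hw2
    have hile : i ≤ p.length := (hDuodd i (by rw [hDu, Finset.mem_image]; exact ⟨w1, hw1, hw1i⟩)).2
    rcases Nat.lt_or_ge i p.length with hlt | hge
    · have hj : idx w2 + 1 ≤ p.length := by omega
      have hadju' : H.Adj u (p.getVert (idx w2 + 1)) := by rw [hw2i]; exact hadju
      exact hnH (rotation hp hcard3 hj hadju' hadjv)
    · have : i = p.length := by omega
      rw [this, SimpleGraph.Walk.getVert_length] at hadju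
      exact hne hadju
  have hunion : (Du ∪ Dv).card ≤ n := by
    rw [← Finset.card_range n]
    apply Finset.card_le_card_of_injOn (fun i => i / 2)
    · intro i hi
      rw [Finset.mem_coe, Finset.mem_union] at hi
      have hodd : ¬Even i ∧ i ≤ p.length := by
        rcases hi with hi | hi
        · exact hDuodd i hi
        · exact hDvodd i hi
      rw [Finset.mem_coe, Finset.mem_range]
      dsimp only
      have := hodd.1
      rw [Nat.not_even_iff] at this
      omega
    · intro i1 h1 i2 h2 hEq
      simp only [Finset.coe_union, Set.mem_union, Finset.mem_coe] at h1 h2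
      have o1 : i1 % 2 = 1 := by
        rcases h1 with h | h
        · exact Nat.not_even_iff.mp (hDuodd _ h).1
        · exact Nat.not_even_iff.mp (hDvodd _ h).1
      have o2 : i2 % 2 = 1 := by
        rcases h2 with h | h
        · exact Nat.not_even_iff.mp (hDuodd _ h).1
        · exact Nat.not_even_iff.mp (hDvodd _ h).1
      simp only at hEq
      omega
  calc H.degree u + H.degree v = Du.card + Dv.card := by rw [hcardDu, hcardDv]
    _ = (Du ∪ Dv).card := (Finset.card_union_of_disjoint hdisjD).symm
    _ ≤ n := hunion


/-- Extract a hamiltonian path from a hamiltonian cycle whose second vertex is `v`. -/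
lemma hampath_of_cycle {G' H : SimpleGraph V} {u v : V} (c : G'.Walk u u)
    (hc : c.IsHamiltonianCycle) (hv1 : c.getVert 1 = v)
    (hsub : ∀ e ∈ c.edges, e ≠ s(u, v) → e ∈ H.edgeSet) :
    ∃ p : H.Walk u v, p.IsHamiltonian := by
  have hnil : ¬c.Nil := hc.isCycle.not_nil
  have hconseq := SimpleGraph.Walk.cons_tail_eq c hnil
  have hedges : c.edges = s(u, c.getVert 1) :: c.tail.edges := by
    conv_lhs => rw [← hconseq]
    rw [SimpleGraph.Walk.edges_cons]
  have htrail := hc.isCycle.isCircuit.isTrail.edges_nodup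
  rw [hedges] at htrail
  have hnotmem : s(u, v) ∉ c.tail.edges := by
    rw [← hv1]; exact (List.nodup_cons.mp htrail).1
  have htsub : ∀ e ∈ c.tail.edges, e ∈ H.edgeSet := by
    intro e he
    refine hsub e ?_ ?_
    · rw [hedges]; exact List.mem_cons_of_mem _ he
    · rintro rfl; exact hnotmem he
  have ht'sub : ∀ e ∈ (c.tail.copy hv1 rfl).edges, e ∈ H.edgeSet := by
    intro e he; apply htsub; rwa [SimpleGraph.Walk.edges_copy] at he
  refine ⟨((c.tail.copy hv1 rfl).transfer H ht'sub).reverse, fun z => ?_⟩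
  rw [SimpleGraph.Walk.support_reverse, List.count_reverse, SimpleGraph.Walk.support_transfer,
    SimpleGraph.Walk.support_copy, SimpleGraph.Walk.support_tail_of_not_nil c hnil]
  exact (SimpleGraph.Walk.isHamiltonianCycle_iff_isCycle_and_support_count_tail_eq_one.mp hc).2 z

/-- If `H` is not hamiltonian but `H` plus the edge `uv` is, then there is a hamiltonian
path from `u` to `v` in `H`. -/
lemma exists_hampath [Fintype V] {H : SimpleGraph V} {u v : V} (hne : u ≠ v)
    (hnH : ¬H.IsHamiltonian) (hH' : (H ⊔ SimpleGraph.fromEdgeSet {s(u, v)}).IsHamiltonian)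
    (hcard : Fintype.card V ≠ 1) :
    ∃ p : H.Walk u v, p.IsHamiltonian := by
  classical
  obtain ⟨a, c0, hc0⟩ := hH' hcard
  have hu : u ∈ c0.support := hc0.mem_support u
  set c := c0.rotate _ hu with hcdef
  have hc : c.IsHamiltonianCycle := IsHamiltonianCycle.rotate hc0 hu
  have hnil : ¬c.Nil := hc.isCycle.not_nil
  have hsub : ∀ e ∈ c.edges, e ≠ s(u, v) → e ∈ H.edgeSet := by
    intro e he hne'
    have hmem := SimpleGraph.Walk.edges_subset_edgeSet c he
    rw [SimpleGraph.edgeSet_sup] at hmem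
    rcases hmem with h | h
    · exact h
    · rw [SimpleGraph.edgeSet_fromEdgeSet] at h
      exact absurd (Set.mem_singleton_iff.mp h.1) hne'
  by_cases hmem : s(u, v) ∈ c.edges
  · rw [mem_edges_iff_exists] at hmem
    obtain ⟨m, hm, hme⟩ := hmem
    have htail_count :=
      (SimpleGraph.Walk.isHamiltonianCycle_iff_isCycle_and_support_count_tail_eq_one.mp hc).2
    have htpath : c.tail.IsPath := by
      rw [SimpleGraph.Walk.isPath_def, SimpleGraph.Walk.support_tail_of_not_nil c hnil]
      rw [List.nodup_iff_count_le_one]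
      intro z
      exact le_of_eq (htail_count z)
    have htlen : c.tail.length + 1 = c.length := SimpleGraph.Walk.length_tail_add_one hnil
    have hupos : ∀ i, i ≤ c.length → c.getVert i = u → i = 0 ∨ i = c.length := by
      intro i hi hgi
      rcases Nat.eq_zero_or_pos i with rfl | hpos
      · exact Or.inl rfl
      · right
        have hcg : c.getVert i = c.tail.getVert (i - 1) := by
          conv_lhs => rw [← SimpleGraph.Walk.cons_tail_eq c hnil]
          rw [SimpleGraph.Walk.getVert_cons _ _ (by omega)]
        have hend : c.tail.getVert c.tail.length = u := SimpleGraph.Walk.getVert_length _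
        have := IsPath.getVert_injOn htpath (i - 1) (by omega) c.tail.length (le_refl _)
          (by rw [← hcg, hgi, hend])
        omega
    rw [Sym2.eq_iff] at hme
    rcases hme with ⟨h1, h2⟩ | ⟨h1, h2⟩
    · have := hupos m (by omega) h1
      have hm0 : m = 0 := by omega
      subst hm0
      exact hampath_of_cycle c hc (by simpa using h2) hsub
    · have := hupos (m + 1) (by omega) h2
      have hmL : m + 1 = c.length := by omega
      have hcr := IsHamiltonianCycle.reverse hc
      have hv1 : c.reverse.getVert 1 = v := by
        rw [SimpleGraph.Walk.getVert_reverse]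
        have : c.length - 1 = m := by omega
        rw [this, h1]
      refine hampath_of_cycle c.reverse hcr hv1 ?_
      intro e he hne'
      rw [SimpleGraph.Walk.edges_reverse, List.mem_reverse] at he
      exact hsub e he hne'
  · have hsub' : ∀ e ∈ c.edges, e ∈ H.edgeSet :=
      fun e he => hsub e he (fun h => hmem (h ▸ he))
    have hct : (c.transfer H hsub').IsHamiltonianCycle := by
      rw [SimpleGraph.Walk.isHamiltonianCycle_iff_isCycle_and_support_count_tail_eq_one]
      refine ⟨hc.isCycle.transfer hsub', fun z => ?_⟩
      rw [SimpleGraph.Walk.support_transfer]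
      exact (SimpleGraph.Walk.isHamiltonianCycle_iff_isCycle_and_support_count_tail_eq_one.mp hc).2 z
    exact absurd (fun _ => ⟨u, _, hct⟩) hnH


/-- Zig-zag hamiltonian path in a complete bipartite graph. -/
lemma zigzag {H : SimpleGraph V} {X Y : Finset V} (hdisj : Disjoint X Y)
    (hadj : ∀ x ∈ X, ∀ y ∈ Y, H.Adj x y) :
    ∀ m, 1 ≤ m → ∀ A B : Finset V, A ⊆ X → B ⊆ Y → A.card = m → B.card = m →
      ∀ x ∈ A, ∀ y ∈ B, ∃ p : H.Walk x y, p.IsPath ∧ ∀ z, z ∈ p.support ↔ z ∈ A ∪ B := by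
  intro m
  induction m with
  | zero => omega
  | succ m ih =>
    intro _ A B hA hB hAcard hBcard x hx y hy
    rcases Nat.eq_zero_or_pos m with rfl | hm
    · obtain ⟨a, ha⟩ := Finset.card_eq_one.mp hAcard
      obtain ⟨b, hb⟩ := Finset.card_eq_one.mp hBcard
      have hxa : x = a := by rw [ha] at hx; exact Finset.mem_singleton.mp hx
      have hyb : y = b := by rw [hb] at hy; exact Finset.mem_singleton.mp hy
      subst hxa; subst hyb
      refine ⟨Walk.cons (hadj x (hA hx) y (hB hy)) Walk.nil, ?_, ?_⟩
      · simp [(hadj x (hA hx) y (hB hy)).ne]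
      · intro z
        simp [ha, hb]
    · have hy'ex : (B.erase y).Nonempty := by
        rw [← Finset.card_pos, Finset.card_erase_of_mem hy, hBcard]
        omega
      have hx'ex : (A.erase x).Nonempty := by
        rw [← Finset.card_pos, Finset.card_erase_of_mem hx, hAcard]
        omega
      obtain ⟨y', hy'⟩ := hy'ex
      obtain ⟨x', hx'⟩ := hx'ex
      have hy'B : y' ∈ B := Finset.mem_of_mem_erase hy'
      have hx'A : x' ∈ A := Finset.mem_of_mem_erase hx'
      have hyB' : y ∈ B.erase y' :=
        Finset.mem_erase.mpr ⟨(Finset.ne_of_mem_erase hy').symm, hy⟩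
      obtain ⟨p, hp, hsup⟩ := ih hm (A.erase x) (B.erase y')
        ((Finset.erase_subset _ _).trans hA) ((Finset.erase_subset _ _).trans hB)
        (by rw [Finset.card_erase_of_mem hx, hAcard]; omega)
        (by rw [Finset.card_erase_of_mem hy'B, hBcard]; omega)
        x' hx' y hyB'
      have hadj1 : H.Adj x y' := hadj x (hA hx) y' (hB hy'B)
      have hadj2 : H.Adj y' x' := (hadj x' (hA hx'A) y' (hB hy'B)).symm
      have hy'nmem : y' ∉ p.support := by
        rw [hsup, Finset.mem_union]
        rintro (h | h)
        · exact Finset.disjoint_left.mp hdisj (hA (Finset.mem_of_mem_erase h)) (hB hy'B)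
        · exact Finset.notMem_erase y' B h
      have hxnmem : x ∉ p.support := by
        rw [hsup, Finset.mem_union]
        rintro (h | h)
        · exact Finset.notMem_erase x A h
        · exact Finset.disjoint_left.mp hdisj (hA hx) (hB (Finset.mem_of_mem_erase h))
      have hxy' : x ≠ y' := fun h =>
        Finset.disjoint_left.mp hdisj (hA hx) (h ▸ hB hy'B)
      refine ⟨Walk.cons hadj1 (Walk.cons hadj2 p), ?_, ?_⟩
      · rw [SimpleGraph.Walk.cons_isPath_iff, SimpleGraph.Walk.cons_isPath_iff]
        refine ⟨⟨hp, hy'nmem⟩, ?_⟩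
        rw [SimpleGraph.Walk.support_cons, List.mem_cons]
        rintro (h | h)
        · exact hxy' h
        · exact hxnmem h
      · intro z
        rw [SimpleGraph.Walk.support_cons, SimpleGraph.Walk.support_cons, List.mem_cons,
          List.mem_cons, hsup]
        have hAeq : A = insert x (A.erase x) := (Finset.insert_erase hx).symm
        have hBeq : B = insert y' (B.erase y') := (Finset.insert_erase hy'B).symm
        constructor
        · rintro (rfl | rfl | h)
          · exact Finset.mem_union_left _ hx
          · exact Finset.mem_union_right _ hy'B
          · rw [Finset.mem_union] at h
            rcases h with h | h
            · exact Finset.mem_union_left _ (Finset.mem_of_mem_erase h)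
            · exact Finset.mem_union_right _ (Finset.mem_of_mem_erase h)
        · intro h
          rw [Finset.mem_union] at h
          rcases h with h | h
          · rcases Finset.mem_insert.mp (hAeq ▸ h) with rfl | h
            · exact Or.inl rfl
            · exact Or.inr (Or.inr (Finset.mem_union_left _ h))
          · rcases Finset.mem_insert.mp (hBeq ▸ h) with rfl | h
            · exact Or.inr (Or.inl rfl)
            · exact Or.inr (Or.inr (Finset.mem_union_right _ h))

/-- A complete bipartite graph with balanced parts of size `≥ 2` is hamiltonian. -/
lemma complete_ham [Fintype V] {H : SimpleGraph V} {X Y : Finset V} {n : ℕ}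
    (hdisj : Disjoint X Y) (hcov : X ∪ Y = Finset.univ)
    (hX : X.card = n) (hY : Y.card = n) (hn : 2 ≤ n)
    (hadj : ∀ x ∈ X, ∀ y ∈ Y, H.Adj x y) : H.IsHamiltonian := by
  obtain ⟨x, hx⟩ := Finset.card_pos.mp (by rw [hX]; omega)
  obtain ⟨y, hy⟩ := Finset.card_pos.mp (by rw [hY]; omega)
  obtain ⟨p, hp, hsup⟩ := zigzag hdisj hadj n (by omega) X Y subset_rfl subset_rfl hX hY x hx y hy
  have hham : p.IsHamiltonian := by
    apply hp.isHamiltonian_of_mem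
    intro w
    rw [hsup, hcov]
    exact Finset.mem_univ w
  have hcard : Fintype.card V = 2 * n := by
    rw [← Finset.card_univ, ← hcov, Finset.card_union_of_disjoint hdisj, hX, hY]; omega
  exact fun _ => ⟨y, _, closure_isHamiltonianCycle hham ((hadj x hx y hy).symm) (by omega)⟩


/-- In a bipartite graph, the number of edges is the sum of degrees over one part. -/
lemma edge_card_eq_sum [Fintype V] {H : SimpleGraph V} [DecidableRel H.Adj]
    {X Y : Finset V} (hdisj : Disjoint X Y)
    (hbipH : ∀ u v, H.Adj u v → (u ∈ X ∧ v ∈ Y) ∨ (u ∈ Y ∧ v ∈ X)) :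
    H.edgeFinset.card = ∑ y ∈ Y, H.degree y := by
  classical
  rcases isEmpty_or_nonempty V with hV | hV
  · have h1 : H.edgeFinset = ∅ := Finset.eq_empty_of_isEmpty _
    have h2 : Y = ∅ := Finset.eq_empty_of_isEmpty _
    rw [h1, h2]
    simp
  have huniq : ∀ e ∈ H.edgeSet, ∀ a b : V, a ∈ Y → a ∈ e → b ∈ Y → b ∈ e → a = b := by
    intro e he
    induction e with
    | _ p q =>
      intro a b haY hae hbY hbe
      rw [SimpleGraph.mem_edgeSet] at he
      rw [Sym2.mem_iff] at hae hbe
      have hpq : (p ∈ X ∧ q ∈ Y) ∨ (p ∈ Y ∧ q ∈ X) := hbipH p q he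
      rcases hpq with ⟨h1, h2⟩ | ⟨h1, h2⟩
      · have ha : a = q := by
          rcases hae with rfl | rfl
          · exact absurd haY (fun h => Finset.disjoint_left.mp hdisj h1 h)
          · rfl
        have hb : b = q := by
          rcases hbe with rfl | rfl
          · exact absurd hbY (fun h => Finset.disjoint_left.mp hdisj h1 h)
          · rfl
        rw [ha, hb]
      · have ha : a = p := by
          rcases hae with rfl | rfl
          · rfl
          · exact absurd haY (fun h => Finset.disjoint_left.mp hdisj h2 h)
        have hb : b = p := by
          rcases hbe with rfl | rfl
          · rfl
          · exact absurd hbY (fun h => Finset.disjoint_left.mp hdisj h2 h)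
        rw [ha, hb]
  have hYex : ∀ e ∈ H.edgeSet, ∃ a, a ∈ Y ∧ a ∈ e := by
    intro e he
    induction e with
    | _ p q =>
      rw [SimpleGraph.mem_edgeSet] at he
      rcases hbipH p q he with ⟨_, h2⟩ | ⟨h1, _⟩
      · exact ⟨q, h2, by rw [Sym2.mem_iff]; right; rfl⟩
      · exact ⟨p, h1, by rw [Sym2.mem_iff]; left; rfl⟩
  set f : Sym2 V → V := fun e =>
    if h : ∃ a, a ∈ Y ∧ a ∈ e then h.choose else Classical.arbitrary V with hf
  have hfmem : ∀ e ∈ H.edgeFinset, f e ∈ Y := by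
    intro e he
    rw [SimpleGraph.mem_edgeFinset] at he
    have h := hYex e he
    rw [hf]
    simp only [dif_pos h]
    exact h.choose_spec.1
  rw [Finset.card_eq_sum_card_fiberwise hfmem]
  apply Finset.sum_congr rfl
  intro y hy
  rw [← SimpleGraph.card_incidenceFinset_eq_degree]
  congr 1
  ext e
  rw [Finset.mem_filter, SimpleGraph.mem_incidenceFinset]
  constructor
  · rintro ⟨he, hfe⟩
    rw [SimpleGraph.mem_edgeFinset] at he
    have h := hYex e he
    have hspec := h.choose_spec
    have : f e = h.choose := by rw [hf]; simp only [dif_pos h]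
    rw [this] at hfe
    exact ⟨he, hfe ▸ hspec.2⟩
  · rintro ⟨he, hye⟩
    have h := hYex e he
    have hspec := h.choose_spec
    have hfe : f e = h.choose := by rw [hf]; simp only [dif_pos h]
    refine ⟨SimpleGraph.mem_edgeFinset.mpr he, ?_⟩
    rw [hfe]
    exact huniq e he _ _ hspec.1 hspec.2 hy hye

/-- Degree is monotone in the graph. -/
lemma degree_mono [Fintype V] {G H : SimpleGraph V} [DecidableRel G.Adj] [DecidableRel H.Adj]
    (hGH : G ≤ H) (v : V) : G.degree v ≤ H.degree v := by
  rw [← SimpleGraph.card_neighborFinset_eq_degree, ← SimpleGraph.card_neighborFinset_eq_degree]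
  apply Finset.card_le_card
  intro w hw
  rw [SimpleGraph.mem_neighborFinset] at hw ⊢
  exact hGH hw

/-- The edge-count bound from the Ore-type degree condition. -/
lemma card_bound [Fintype V] {H : SimpleGraph V} [DecidableRel H.Adj]
    {X Y : Finset V} {n k : ℕ} (hdisj : Disjoint X Y)
    (hX : X.card = n) (hY : Y.card = n)
    (hbipH : ∀ u v, H.Adj u v → (u ∈ X ∧ v ∈ Y) ∨ (u ∈ Y ∧ v ∈ X))
    {u : V} (hu : u ∈ X)
    (ore : ∀ w ∈ Y, ¬H.Adj u w → H.degree u + H.degree w ≤ n)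
    (h2d : 2 * H.degree u ≤ n) (hkd : k ≤ H.degree u) :
    (H.edgeFinset.card : ℤ) ≤ (n : ℤ) * ((n : ℤ) - k) + (k : ℤ) ^ 2 := by
  classical
  set d := H.degree u with hd
  have hNuY : H.neighborFinset u ⊆ Y := by
    intro w hw
    rw [SimpleGraph.mem_neighborFinset] at hw
    rcases hbipH _ _ hw with ⟨_, h2⟩ | ⟨h1, _⟩
    · exact h2
    · exact absurd hu (fun h => Finset.disjoint_left.mp hdisj h h1)
  have hNcard : (H.neighborFinset u).card = d := SimpleGraph.card_neighborFinset_eq_degree _ _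
  have hdegY : ∀ y ∈ Y, H.degree y ≤ n := by
    intro y hy
    rw [← SimpleGraph.card_neighborFinset_eq_degree, ← hX]
    apply Finset.card_le_card
    intro w hw
    rw [SimpleGraph.mem_neighborFinset] at hw
    rcases hbipH _ _ hw with ⟨h1, _⟩ | ⟨_, h2⟩
    · exact absurd hy (fun h => Finset.disjoint_left.mp hdisj h1 h)
    · exact h2
  have hsum := edge_card_eq_sum hdisj hbipH
  have hsplit : ∑ y ∈ Y \ H.neighborFinset u, H.degree y + ∑ y ∈ H.neighborFinset u, H.degree y
      = ∑ y ∈ Y, H.degree y := Finset.sum_sdiff hNuY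
  have hb1 : ∑ y ∈ H.neighborFinset u, H.degree y ≤ d * n := by
    calc ∑ y ∈ H.neighborFinset u, H.degree y ≤ ∑ _y ∈ H.neighborFinset u, n :=
          Finset.sum_le_sum (fun y hy => hdegY y (hNuY hy))
      _ = d * n := by rw [Finset.sum_const, hNcard, smul_eq_mul]
  have hb2 : ∑ y ∈ Y \ H.neighborFinset u, H.degree y ≤ (n - d) * (n - d) := by
    have hcard : (Y \ H.neighborFinset u).card = n - d := by
      rw [Finset.card_sdiff_of_subset hNuY, hY, hNcard]
    calc ∑ y ∈ Y \ H.neighborFinset u, H.degree y ≤ ∑ _y ∈ Y \ H.neighborFinset u, (n - d) := by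
          apply Finset.sum_le_sum
          intro y hy
          rw [Finset.mem_sdiff] at hy
          have hnadj : ¬H.Adj u y := fun h =>
            hy.2 ((SimpleGraph.mem_neighborFinset _ _ _).mpr h)
          have := ore y hy.1 hnadj
          omega
      _ = (n - d) * (n - d) := by rw [Finset.sum_const, hcard, smul_eq_mul]
  have hmain : H.edgeFinset.card ≤ (n - d) * (n - d) + d * n := by
    rw [hsum, ← hsplit]
    omega
  have hdn : d ≤ n := by omega
  have hcast : ((n : ℤ) - d) * ((n : ℤ) - d) + (d : ℤ) * n
      = ((n - d) * (n - d) + d * n : ℕ) := by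
    push_cast [Nat.cast_sub hdn]
    ring
  have h1 : (H.edgeFinset.card : ℤ) ≤ ((n : ℤ) - d) * ((n : ℤ) - d) + (d : ℤ) * n := by
    rw [hcast]
    exact_mod_cast hmain
  have hkd' : (k : ℤ) ≤ d := by exact_mod_cast hkd
  have h2d' : 2 * (d : ℤ) ≤ n := by exact_mod_cast h2d
  nlinarith [mul_nonneg (sub_nonneg.mpr hkd') (by linarith : (0 : ℤ) ≤ (n : ℤ) - d - k)]


/-- Main induction: every bipartite supergraph of `G` (w.r.t. `X, Y`) is hamiltonian. -/
lemma main_aux [Fintype V] {G : SimpleGraph V} [DecidableRel G.Adj] {X Y : Finset V} {n k : ℕ}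
    (hdisj : Disjoint X Y) (hcov : X ∪ Y = Finset.univ)
    (hX : X.card = n) (hY : Y.card = n) (hk : 1 ≤ k) (hkn : 3 * k + 2 ≤ n)
    (hδ : ∀ v : V, k ≤ G.degree v)
    (he : (n : ℤ) * ((n : ℤ) - k) + (k : ℤ) ^ 2 < (G.edgeFinset.card : ℤ)) :
    ∀ m : ℕ, ∀ H : SimpleGraph V, G ≤ H →
      (∀ u v, H.Adj u v → (u ∈ X ∧ v ∈ Y) ∨ (u ∈ Y ∧ v ∈ X)) →
      {p : V × V | p.1 ∈ X ∧ p.2 ∈ Y ∧ ¬H.Adj p.1 p.2}.ncard ≤ m →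
      H.IsHamiltonian := by
  have hn2 : 2 ≤ n := by omega
  have hcardV : Fintype.card V = 2 * n := by
    rw [← Finset.card_univ, ← hcov, Finset.card_union_of_disjoint hdisj, hX, hY]; omega
  intro m
  induction m with
  | zero =>
    intro H hGH hbipH hnp
    have hempty : {p : V × V | p.1 ∈ X ∧ p.2 ∈ Y ∧ ¬H.Adj p.1 p.2} = ∅ := by
      rw [← Set.ncard_eq_zero (Set.toFinite _)]
      omega
    have hadj : ∀ x ∈ X, ∀ y ∈ Y, H.Adj x y := by
      intro x hx y hy
      by_contra hne
      exact absurd (Set.eq_empty_iff_forall_notMem.mp hempty (x, y)) (fun h => h ⟨hx, hy, hne⟩)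
    exact complete_ham hdisj hcov hX hY hn2 hadj
  | succ m ih =>
    intro H hGH hbipH hnp
    classical
    letI : DecidableRel H.Adj := Classical.decRel _
    by_cases hHam : H.IsHamiltonian
    · exact hHam
    exfalso
    -- every cross non-adjacent pair satisfies the Ore bound
    have oreAll : ∀ a ∈ X, ∀ b ∈ Y, ¬H.Adj a b → H.degree a + H.degree b ≤ n := by
      intro a ha b hb hnadj
      have hab : a ≠ b := fun h => Finset.disjoint_left.mp hdisj ha (h ▸ hb)
      set H' := H ⊔ SimpleGraph.fromEdgeSet {s(a, b)} with hH'
      have hHH' : H ≤ H' := le_sup_left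
      have hGH' : G ≤ H' := le_trans hGH hHH'
      have hbipH' : ∀ u v, H'.Adj u v → (u ∈ X ∧ v ∈ Y) ∨ (u ∈ Y ∧ v ∈ X) := by
        intro u v huv
        rcases huv with huv | huv
        · exact hbipH u v huv
        · rw [SimpleGraph.fromEdgeSet_adj] at huv
          have := huv.1
          rw [Set.mem_singleton_iff, Sym2.eq_iff] at this
          rcases this with ⟨rfl, rfl⟩ | ⟨rfl, rfl⟩
          · exact Or.inl ⟨ha, hb⟩
          · exact Or.inr ⟨hb, ha⟩
      have hss : {p : V × V | p.1 ∈ X ∧ p.2 ∈ Y ∧ ¬H'.Adj p.1 p.2}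
          ⊂ {p : V × V | p.1 ∈ X ∧ p.2 ∈ Y ∧ ¬H.Adj p.1 p.2} := by
        constructor
        · rintro ⟨p1, p2⟩ ⟨h1, h2, h3⟩
          exact ⟨h1, h2, fun h => h3 (hHH' h)⟩
        · intro hsup
          have hmem : (a, b) ∈ {p : V × V | p.1 ∈ X ∧ p.2 ∈ Y ∧ ¬H.Adj p.1 p.2} :=
            ⟨ha, hb, hnadj⟩
          have := hsup hmem
          apply this.2.2
          exact Or.inr ((SimpleGraph.fromEdgeSet_adj _).mpr ⟨Set.mem_singleton _, hab⟩)
      have hlt : {p : V × V | p.1 ∈ X ∧ p.2 ∈ Y ∧ ¬H'.Adj p.1 p.2}.ncard ≤ m := by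
        have := Set.ncard_lt_ncard hss (Set.toFinite _)
        omega
      have hH'Ham : H'.IsHamiltonian := ih H' hGH' hbipH' hlt
      obtain ⟨p, hp⟩ := exists_hampath hab hHam hH'Ham (by omega)
      exact ore_of_hampath hdisj hcov hX hY hn2 hbipH ha hb hnadj hHam p hp
    -- there is some non-adjacent cross pair, else complete bipartite (hamiltonian)
    by_cases hcomplete : ∀ x ∈ X, ∀ y ∈ Y, H.Adj x y
    · exact hHam (complete_ham hdisj hcov hX hY hn2 hcomplete)
    push_neg at hcomplete
    obtain ⟨u, hu, v, hv, hnadj⟩ := hcomplete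
    have hedge : (H.edgeFinset.card : ℤ) ≤ (n : ℤ) * ((n : ℤ) - k) + (k : ℤ) ^ 2 := by
      rcases le_total (H.degree u) (H.degree v) with hle | hle
      · refine card_bound hdisj hX hY hbipH hu (fun w hw hn' => oreAll u hu w hw hn') ?_ ?_
        · have := oreAll u hu v hv hnadj
          omega
        · exact le_trans (hδ u) (degree_mono hGH u)
      · have hbipH' : ∀ a b, H.Adj a b → (a ∈ Y ∧ b ∈ X) ∨ (a ∈ X ∧ b ∈ Y) :=
          fun a b h => (hbipH a b h).symm
        refine card_bound hdisj.symm hY hX hbipH' hv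
          (fun w hw hn' => ?_) ?_ ?_
        · have := oreAll w hw v hv (fun h => hn' h.symm)
          omega
        · have := oreAll u hu v hv hnadj
          omega
        · exact le_trans (hδ v) (degree_mono hGH v)
    have hmono : (G.edgeFinset.card : ℤ) ≤ (H.edgeFinset.card : ℤ) := by
      exact_mod_cast Finset.card_le_card (SimpleGraph.edgeFinset_mono hGH)
    linarith

end Stmt16Aux

/-- Moon–Moser-type corollary. A balanced bipartite graph of order `2n`
with `δ(G) ≥ k`, `1 ≤ k ≤ (n−2)/3`, and `e(G) > n(n−k) + k²` is Hamiltonian. -/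
theorem stmt16 {V : Type*} [Fintype V] [DecidableEq V] (n k : ℕ)
    (G : SimpleGraph V) [DecidableRel G.Adj] (X Y : Finset V)
    (hdisj : Disjoint X Y) (hcov : X ∪ Y = Finset.univ)
    (hX : X.card = n) (hY : Y.card = n)
    (hbip : ∀ u v, G.Adj u v → (u ∈ X ∧ v ∈ Y) ∨ (u ∈ Y ∧ v ∈ X))
    (hk : 1 ≤ k) (hkn : 3 * k + 2 ≤ n)
    (hδ : ∀ v : V, k ≤ G.degree v)
    (he : (n : ℤ) * ((n : ℤ) - k) + (k : ℤ) ^ 2 < (G.edgeFinset.card : ℤ)) :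
    G.IsHamiltonian :=
  Stmt16Aux.main_aux hdisj hcov hX hY hk hkn hδ he
    {p : V × V | p.1 ∈ X ∧ p.2 ∈ Y ∧ ¬G.Adj p.1 p.2}.ncard G le_rfl hbip le_rfl
end

section
/- Let G be an (n+p+2)-closed balanced bipartite graph of order 2n with parts X, Y of size n, where k ≥ p ≥ 0 and n ≥ 2k − p + 2, and suppose e(G) > n(n−k+p−1) + (k+2)(k−p+1). Then the set U = {x ∈ X : d_G(x) ≥ (n+p+2)/2} has size at least k + 2, and similarly for the corresponding set W ⊆ Y; moreover every vertex of U is adjacent to every vertex of W, so K_{k+2,k+2} ⊆ G. -/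
lemma stmt17_arith (n k p u e : ℤ) (hkp : p ≤ k) (hp : 0 ≤ p)
    (hn : 2 * k + 2 ≤ n + p) (hu : u ≤ k + 1) (hu0 : 0 ≤ u)
    (hb : 2 * e ≤ u * (2 * n) + (n - u) * (n + p + 1))
    (he : n * (n - k + p - 1) + (k + 2) * (k - p + 1) < e) : False := by
  nlinarith [mul_nonneg (by linarith : (0:ℤ) ≤ n - (2*k - p + 2)) (by linarith : (0:ℤ) ≤ n - k - 2),
    mul_nonneg (by linarith : (0:ℤ) ≤ n - p - 1) (by linarith : (0:ℤ) ≤ k + 1 - u)]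

lemma stmt17_count {V : Type*} [Fintype V] [DecidableEq V] (n k p : ℕ)
    (G : SimpleGraph V) [DecidableRel G.Adj] (X : Finset V)
    (hX : X.card = n)
    (hdeg : ∀ x ∈ X, G.degree x ≤ n)
    (hkp : p ≤ k) (hn : 2 * k + 2 ≤ n + p)
    (hsum : ∑ x ∈ X, G.degree x = G.edgeFinset.card)
    (he : (n : ℤ) * ((n : ℤ) - k + p - 1) + ((k : ℤ) + 2) * ((k : ℤ) - p + 1)
        < (G.edgeFinset.card : ℤ)) :
    k + 2 ≤ (X.filter fun x => n + p + 2 ≤ 2 * G.degree x).card := by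
  by_contra h
  push_neg at h
  set U := X.filter fun x => n + p + 2 ≤ 2 * G.degree x with hU
  have hsplit : ∑ x ∈ X, (2 * G.degree x) =
      ∑ x ∈ U, (2 * G.degree x) +
      ∑ x ∈ X.filter (fun x => ¬ (n + p + 2 ≤ 2 * G.degree x)), (2 * G.degree x) :=
    (Finset.sum_filter_add_sum_filter_not X _ _).symm
  have h1 : ∑ x ∈ U, (2 * G.degree x) ≤ U.card * (2 * n) := by
    apply Finset.sum_le_card_nsmul
    intro x hx
    have := hdeg x (Finset.mem_filter.mp hx).1
    omega
  have h2 : ∑ x ∈ X.filter (fun x => ¬ (n + p + 2 ≤ 2 * G.degree x)), (2 * G.degree x)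
      ≤ (X.filter (fun x => ¬ (n + p + 2 ≤ 2 * G.degree x))).card * (n + p + 1) := by
    apply Finset.sum_le_card_nsmul
    intro x hx
    have := (Finset.mem_filter.mp hx).2
    omega
  have hcard : (X.filter (fun x => ¬ (n + p + 2 ≤ 2 * G.degree x))).card = n - U.card := by
    rw [Finset.filter_not, Finset.card_sdiff_of_subset (Finset.filter_subset _ _), hX]
  have hUle : U.card ≤ n := by
    calc U.card ≤ X.card := Finset.card_filter_le _ _
    _ = n := hX
  have htot : 2 * G.edgeFinset.card ≤ U.card * (2 * n) + (n - U.card) * (n + p + 1) := by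
    rw [← hsum, Finset.mul_sum]
    rw [hcard] at h2
    omega
  refine stmt17_arith n k p U.card G.edgeFinset.card (by exact_mod_cast hkp)
    (by positivity) (by exact_mod_cast hn) (by exact_mod_cast (by omega : U.card ≤ k + 1))
    (by positivity) ?_ he
  have : ((n : ℤ) - U.card) = ((n - U.card : ℕ) : ℤ) := by
    have := hUle; push_cast; omega
  rw [this]
  exact_mod_cast htot

/-- In an `(n+p+2)`-closed balanced bipartite graph with
`k ≥ p ≥ 0`, `n ≥ 2k − p + 2` and `e(G) > n(n−k+p−1) + (k+2)(k−p+1)`, the sets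
`U = {x ∈ X : d(x) ≥ (n+p+2)/2}` and `W = {y ∈ Y : d(y) ≥ (n+p+2)/2}` have size at least
`k + 2`, every vertex of `U` is adjacent to every vertex of `W`, and `K_{k+2,k+2} ⊆ G`. -/
theorem stmt17 {V : Type*} [Fintype V] [DecidableEq V] (n k p : ℕ)
    (G : SimpleGraph V) [DecidableRel G.Adj] (X Y : Finset V)
    (hdisj : Disjoint X Y) (hcov : X ∪ Y = Finset.univ)
    (hX : X.card = n) (hY : Y.card = n)
    (hbip : ∀ u v, G.Adj u v → (u ∈ X ∧ v ∈ Y) ∨ (u ∈ Y ∧ v ∈ X))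
    (hkp : p ≤ k) (hn : 2 * k + 2 ≤ n + p)
    (hclosed : ∀ x ∈ X, ∀ y ∈ Y, ¬ G.Adj x y →
      G.degree x + G.degree y < n + p + 2)
    (he : (n : ℤ) * ((n : ℤ) - k + p - 1) + ((k : ℤ) + 2) * ((k : ℤ) - p + 1)
        < (G.edgeFinset.card : ℤ)) :
    k + 2 ≤ (X.filter fun x => n + p + 2 ≤ 2 * G.degree x).card ∧
    k + 2 ≤ (Y.filter fun y => n + p + 2 ≤ 2 * G.degree y).card ∧
    (∀ u ∈ X.filter fun x => n + p + 2 ≤ 2 * G.degree x,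
      ∀ w ∈ Y.filter fun y => n + p + 2 ≤ 2 * G.degree y, G.Adj u w) ∧
    ∃ A B : Finset V, A ⊆ X ∧ B ⊆ Y ∧ A.card = k + 2 ∧ B.card = k + 2 ∧
      ∀ a ∈ A, ∀ b ∈ B, G.Adj a b := by
  -- neighborhoods
  have hNX : ∀ x ∈ X, G.neighborFinset x = Y.filter (G.Adj x) := by
    intro x hx
    ext v
    simp only [SimpleGraph.mem_neighborFinset, Finset.mem_filter]
    constructor
    · intro hv
      rcases hbip x v hv with ⟨_, h2⟩ | ⟨h1, _⟩
      · exact ⟨h2, hv⟩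
      · exact (Finset.disjoint_left.mp hdisj hx h1).elim
    · exact fun h => h.2
  have hNY : ∀ y ∈ Y, G.neighborFinset y = X.filter (G.Adj y) := by
    intro y hy
    ext v
    simp only [SimpleGraph.mem_neighborFinset, Finset.mem_filter]
    constructor
    · intro hv
      rcases hbip y v hv with ⟨h1, _⟩ | ⟨_, h2⟩
      · exact absurd h1 (fun h1 => Finset.disjoint_left.mp hdisj h1 hy)
      · exact ⟨h2, hv⟩
    · exact fun h => h.2
  have hdegX : ∀ x ∈ X, G.degree x ≤ n := by
    intro x hx
    rw [SimpleGraph.degree, hNX x hx, ← hY]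
    exact Finset.card_filter_le _ _
  have hdegY : ∀ y ∈ Y, G.degree y ≤ n := by
    intro y hy
    rw [SimpleGraph.degree, hNY y hy, ← hX]
    exact Finset.card_filter_le _ _
  -- degree sums
  have hseq : ∑ x ∈ X, G.degree x = ∑ y ∈ Y, G.degree y := by
    calc ∑ x ∈ X, G.degree x = ∑ x ∈ X, (Y.filter (G.Adj x)).card := by
          apply Finset.sum_congr rfl
          intro x hx
          rw [SimpleGraph.degree, hNX x hx]
      _ = ∑ x ∈ X, ∑ y ∈ Y, if G.Adj x y then 1 else 0 := by
          apply Finset.sum_congr rfl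
          intro x _
          rw [Finset.card_filter]
      _ = ∑ y ∈ Y, ∑ x ∈ X, if G.Adj x y then 1 else 0 := Finset.sum_comm
      _ = ∑ y ∈ Y, (X.filter (G.Adj y)).card := by
          apply Finset.sum_congr rfl
          intro y _
          rw [Finset.card_filter]
          apply Finset.sum_congr rfl
          intro x _
          simp [SimpleGraph.adj_comm]
      _ = ∑ y ∈ Y, G.degree y := by
          apply Finset.sum_congr rfl
          intro y hy
          rw [SimpleGraph.degree, hNY y hy]
  have h2e : ∑ x ∈ X, G.degree x + ∑ y ∈ Y, G.degree y = 2 * G.edgeFinset.card := by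
    rw [← Finset.sum_union hdisj, hcov]
    exact G.sum_degrees_eq_twice_card_edges
  have hsumX : ∑ x ∈ X, G.degree x = G.edgeFinset.card := by omega
  have hsumY : ∑ y ∈ Y, G.degree y = G.edgeFinset.card := by omega
  have hUcard := stmt17_count n k p G X hX hdegX hkp hn hsumX he
  have hWcard := stmt17_count n k p G Y hY hdegY hkp hn hsumY he
  have hadj : ∀ u ∈ X.filter fun x => n + p + 2 ≤ 2 * G.degree x,
      ∀ w ∈ Y.filter fun y => n + p + 2 ≤ 2 * G.degree y, G.Adj u w := by
    intro u hu w hw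
    rw [Finset.mem_filter] at hu hw
    by_contra hne
    have := hclosed u hu.1 w hw.1 hne
    omega
  refine ⟨hUcard, hWcard, hadj, ?_⟩
  obtain ⟨A, hA, hAcard⟩ := Finset.exists_subset_card_eq hUcard
  obtain ⟨B, hB, hBcard⟩ := Finset.exists_subset_card_eq hWcard
  exact ⟨A, B, hA.trans (Finset.filter_subset _ _), hB.trans (Finset.filter_subset _ _),
    hAcard, hBcard, fun a ha b hb => hadj a (hA ha) b (hB hb)⟩
end
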